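/- arXiv:1508.01293 — 6 statements merged into one kernel-verified Lean document; each statement's English description precedes it below -/
import Mathlib

section
/- With the hypotheses of lemma on Frobenius eigenvalues (g ≥ 3, full Weyl group (ℤ/2ℤ)^g ⋊ S_g), let n be an odd positive integer, N a positive integer, and j: {1,…,2n} → {1,…,2g} an injective function. Then ∏_{i=1}^n μ_{j(i)}^N ≠ ∏_{i=n+1}^{2n} μ_{j(i)}^N. -/
set_option linter.unusedSectionVars false

lemma finRevNe {m : ℕ} (hm : m % 2 = 0) (i : Fin m) : Fin.rev i ≠ i := by
  intro h
  have h1 := congrArg Fin.val h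
  rw [Fin.val_rev] at h1
  have := i.isLt
  omega

lemma evenCardInvol {α : Type*} [DecidableEq α] :
    ∀ (n : ℕ) (s : Finset α) (f : α → α), s.card = n → (∀ x ∈ s, f x ∈ s) →
      (∀ x, f (f x) = x) → (∀ x ∈ s, f x ≠ x) → Even n := by
  intro n
  induction n using Nat.strong_induction_on with
  | _ n ih =>
    intro s f hcard hmem hinv hne
    rcases s.eq_empty_or_nonempty with rfl | ⟨x, hx⟩
    · simp at hcard; simp [← hcard]
    · have hfx : f x ∈ s := hmem x hx
      have hfxx : f x ≠ x := hne x hx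
      have h1 : f x ∈ s.erase x := Finset.mem_erase.2 ⟨hfxx, hfx⟩
      set s' := (s.erase x).erase (f x) with hs'
      have hc1 : (s.erase x).card = n - 1 := by rw [Finset.card_erase_of_mem hx, hcard]
      have hc : s'.card = n - 2 := by
        rw [hs', Finset.card_erase_of_mem h1, hc1]; omega
      have hn2 : 2 ≤ n := by
        have : (s.erase x).Nonempty := ⟨f x, h1⟩
        have := Finset.card_pos.2 this
        omega
      have hmem' : ∀ y ∈ s', f y ∈ s' := by
        intro y hy
        simp only [hs', Finset.mem_erase] at hy ⊢
        obtain ⟨hy1, hy2, hy3⟩ := hy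
        refine ⟨?_, ?_, hmem y hy3⟩
        · intro h; apply hy2; rw [← hinv y, h, hinv]
        · intro h; apply hy1; rw [← hinv y, h]
      have hne' : ∀ y ∈ s', f y ≠ y := fun y hy =>
        hne y (Finset.mem_of_mem_erase (Finset.mem_of_mem_erase hy))
      have := ih (n - 2) (by omega) s' f hc hmem' hinv hne'
      obtain ⟨k, hk⟩ := this
      exact ⟨k + 1, by omega⟩


section
variable {m : ℕ}

lemma flip_comm (a : Fin m) :
    ∀ i, (Equiv.swap a (Fin.rev a)) (Fin.rev i) = Fin.rev ((Equiv.swap a (Fin.rev a)) i) := by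
  intro i
  rcases eq_or_ne i a with rfl | h1
  · simp [Equiv.swap_apply_left, Equiv.swap_apply_right, Fin.rev_rev]
  rcases eq_or_ne i (Fin.rev a) with rfl | h2
  · simp [Fin.rev_rev, Equiv.swap_apply_left, Equiv.swap_apply_right]
  · have h3 : Fin.rev i ≠ a := fun h => h2 (by rw [← h, Fin.rev_rev])
    have h4 : Fin.rev i ≠ Fin.rev a := fun h => h1 (Fin.rev_injective h)
    rw [Equiv.swap_apply_of_ne_of_ne h3 h4, Equiv.swap_apply_of_ne_of_ne h1 h2]

/-- pair swap -/
def pairSwap (a b : Fin m) : Equiv.Perm (Fin m) :=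
  Equiv.swap a b * Equiv.swap (Fin.rev a) (Fin.rev b)

section
variable {a b : Fin m} (hab : a ≠ b) (hbra : b ≠ Fin.rev a)
  (haa : Fin.rev a ≠ a) (hbb : Fin.rev b ≠ b)

include hab hbra haa hbb

lemma pairSwap_apply_a : (pairSwap a b) a = b := by
  have h1 : a ≠ Fin.rev a := haa.symm
  have h2 : a ≠ Fin.rev b := fun h => hbra (by rw [h, Fin.rev_rev])
  rw [pairSwap, Equiv.Perm.mul_apply, Equiv.swap_apply_of_ne_of_ne h1 h2,
    Equiv.swap_apply_left]

lemma pairSwap_apply_b : (pairSwap a b) b = a := by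
  have h1 : b ≠ Fin.rev b := hbb.symm
  rw [pairSwap, Equiv.Perm.mul_apply, Equiv.swap_apply_of_ne_of_ne hbra h1,
    Equiv.swap_apply_right]

lemma pairSwap_apply_ra : (pairSwap a b) (Fin.rev a) = Fin.rev b := by
  have h1' : Fin.rev b ≠ a := fun h => hbra (by rw [← h, Fin.rev_rev])
  have h2 : Fin.rev b ≠ b := hbb
  rw [pairSwap, Equiv.Perm.mul_apply, Equiv.swap_apply_left,
    Equiv.swap_apply_of_ne_of_ne h1' h2]

lemma pairSwap_apply_rb : (pairSwap a b) (Fin.rev b) = Fin.rev a := by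
  have h1 : Fin.rev a ≠ a := haa
  have h2 : Fin.rev a ≠ b := fun h => hbra h.symm
  rw [pairSwap, Equiv.Perm.mul_apply, Equiv.swap_apply_right,
    Equiv.swap_apply_of_ne_of_ne h1 h2]

lemma pairSwap_apply_other {i : Fin m} (h1 : i ≠ a) (h2 : i ≠ b)
    (h3 : i ≠ Fin.rev a) (h4 : i ≠ Fin.rev b) : (pairSwap a b) i = i := by
  rw [pairSwap, Equiv.Perm.mul_apply, Equiv.swap_apply_of_ne_of_ne h3 h4,
    Equiv.swap_apply_of_ne_of_ne h1 h2]

lemma pairSwap_comm :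
    ∀ i, (pairSwap a b) (Fin.rev i) = Fin.rev ((pairSwap a b) i) := by
  intro i
  rcases eq_or_ne i a with rfl | hia
  · rw [pairSwap_apply_ra hab hbra haa hbb, pairSwap_apply_a hab hbra haa hbb]
  rcases eq_or_ne i b with rfl | hib
  · rw [pairSwap_apply_rb hab hbra haa hbb, pairSwap_apply_b hab hbra haa hbb]
  rcases eq_or_ne i (Fin.rev a) with rfl | hira
  · rw [Fin.rev_rev, pairSwap_apply_a hab hbra haa hbb,
      pairSwap_apply_ra hab hbra haa hbb, Fin.rev_rev]
  rcases eq_or_ne i (Fin.rev b) with rfl | hirb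
  · rw [Fin.rev_rev, pairSwap_apply_b hab hbra haa hbb,
      pairSwap_apply_rb hab hbra haa hbb, Fin.rev_rev]
  · have r1 : Fin.rev i ≠ a := fun h => hira (by rw [← h, Fin.rev_rev])
    have r2 : Fin.rev i ≠ b := fun h => hirb (by rw [← h, Fin.rev_rev])
    have r3 : Fin.rev i ≠ Fin.rev a := fun h => hia (Fin.rev_injective h)
    have r4 : Fin.rev i ≠ Fin.rev b := fun h => hib (Fin.rev_injective h)
    rw [pairSwap_apply_other hab hbra haa hbb r1 r2 r3 r4,
      pairSwap_apply_other hab hbra haa hbb hia hib hira hirb]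
end
end

open Polynomial IntermediateField

noncomputable section

variable (q M : ℕ)

/-- the auxiliary polynomial -/
def auxPoly : ℚ[X] := (X ^ 2 - C (q : ℚ)) * (X ^ (2 * M) - 1)

lemma auxPoly_ne_zero (hM : 0 < M) : auxPoly q M ≠ 0 := by
  have h1 : (X ^ 2 - C (q : ℚ)).Monic := monic_X_pow_sub_C _ (by norm_num)
  have h2 : (X ^ (2 * M) - 1 : ℚ[X]).Monic := by
    simpa using monic_X_pow_sub_C (1 : ℚ) (by omega)
  exact (h1.mul h2).ne_zero

/-- the splitting field -/
def auxField : IntermediateField ℚ ℂ :=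
  IntermediateField.adjoin ℚ ((auxPoly q M).rootSet ℂ)

lemma auxField_isSplittingField :
    IsSplittingField ℚ (auxField q M) (auxPoly q M) :=
  IntermediateField.adjoin_rootSet_isSplittingField (IsAlgClosed.splits _)

lemma mem_auxField (hM : 0 < M) (x : ℂ) (hx : x ^ 2 = (q:ℂ) ∨ x ^ (2*M) = 1) :
    x ∈ auxField q M := by
  apply IntermediateField.subset_adjoin
  rw [Polynomial.mem_rootSet]
  refine ⟨auxPoly_ne_zero q M hM, ?_⟩
  have : (Polynomial.aeval x) (auxPoly q M) =
      (x ^ 2 - (q:ℂ)) * (x ^ (2*M) - 1) := by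
    simp [auxPoly]
  rw [this]
  rcases hx with h | h
  · rw [h]; ring
  · rw [h]; ring

end

noncomputable section
variable (q M : ℕ) (hM : 0 < M)

instance : FiniteDimensional ℚ (auxField q M) := by
  have := auxField_isSplittingField q M
  exact IsSplittingField.finiteDimensional _ (auxPoly q M)

instance : Normal ℚ (auxField q M) := by
  have := auxField_isSplittingField q M
  exact Normal.of_isSplittingField (auxPoly q M)

instance : IsGalois ℚ (auxField q M) := ⟨⟩

end

noncomputable section
variable (q M : ℕ)

lemma auxField_sq_case (ρ : auxField q M ≃ₐ[ℚ] auxField q M) (s : auxField q M)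
    (hs : s ^ 2 = (q : auxField q M)) : ρ s = s ∨ ρ s = -s := by
  have h : (ρ s) ^ 2 = s ^ 2 := by rw [← map_pow, hs, map_natCast]
  have h2 : (ρ s - s) * (ρ s + s) = 0 := by
    have h3 : (ρ s - s) * (ρ s + s) = (ρ s) ^ 2 - s ^ 2 := by ring
    rw [h3, h, sub_self]
  rcases mul_eq_zero.1 h2 with h3 | h3
  · exact Or.inl (sub_eq_zero.1 h3)
  · exact Or.inr (eq_neg_of_add_eq_zero_left h3)

lemma exists_zeta (hM : 0 < M) : ∃ Z : auxField q M, Z ^ (2 * M) = 1 ∧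
    ∀ s : auxField q M, s ^ (2 * M) = 1 → ∃ k : ℕ, s = Z ^ k := by
  haveI : NeZero (2 * M) := ⟨by omega⟩
  have hζ := Complex.isPrimitiveRoot_exp (2 * M) (show 2 * M ≠ 0 by omega)
  refine ⟨⟨_, mem_auxField q M hM _ (Or.inr hζ.pow_eq_one)⟩, ?_, ?_⟩
  · apply Subtype.ext
    rw [SubmonoidClass.coe_pow]
    exact hζ.pow_eq_one
  · intro s hs
    have hs' : (s : ℂ) ^ (2 * M) = 1 := by
      have h := congrArg (fun y : auxField q M => (y : ℂ)) hs
      push_cast at h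
      exact h
    obtain ⟨i, _, hi⟩ := hζ.eq_pow_of_pow_eq_one hs'
    exact ⟨i, Subtype.ext (by rw [SubmonoidClass.coe_pow]; exact hi.symm)⟩

lemma auxField_comm (hM : 0 < M) (σ τ : auxField q M ≃ₐ[ℚ] auxField q M)
    (x : auxField q M) : σ (τ x) = τ (σ x) := by
  obtain ⟨Z, hZpow, hpow⟩ := exists_zeta q M hM
  obtain ⟨x, hx⟩ := x
  induction hx using IntermediateField.adjoin_induction with
  | algebraMap r =>
      show σ (τ (algebraMap ℚ (auxField q M) r)) = τ (σ (algebraMap ℚ (auxField q M) r))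
      simp
  | add x y hx hy ihx ihy =>
      have hxy : (⟨x + y, add_mem hx hy⟩ : auxField q M)
          = ⟨x, hx⟩ + ⟨y, hy⟩ := rfl
      rw [hxy, map_add, map_add, ihx, ihy, map_add, map_add]
  | mul x y hx hy ihx ihy =>
      have hxy : (⟨x * y, mul_mem hx hy⟩ : auxField q M)
          = ⟨x, hx⟩ * ⟨y, hy⟩ := rfl
      rw [hxy, map_mul, map_mul, ihx, ihy, map_mul, map_mul]
  | inv x hx ihx =>
      have hxy : (⟨x⁻¹, inv_mem hx⟩ : auxField q M) = (⟨x, hx⟩ : auxField q M)⁻¹ := rfl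
      rw [hxy, map_inv₀, map_inv₀, ihx, map_inv₀, map_inv₀]
  | mem x hx =>
      have hcase : x ^ 2 = (q : ℂ) ∨ x ^ (2 * M) = 1 := by
        rw [Polynomial.mem_rootSet] at hx
        have h0 := hx.2
        have h1 : (Polynomial.aeval x) (auxPoly q M) =
            (x ^ 2 - (q:ℂ)) * (x ^ (2*M) - 1) := by simp [auxPoly]
        rw [h1] at h0
        rcases mul_eq_zero.1 h0 with h | h
        · exact Or.inl (by linear_combination h)
        · exact Or.inr (by linear_combination h)
      set X : auxField q M := ⟨x, IntermediateField.subset_adjoin _ _ hx⟩ with hXdef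
      show σ (τ X) = τ (σ X)
      rcases hcase with hc | hc
      · have hX2 : X ^ 2 = (q : auxField q M) := by
          apply Subtype.ext; push_cast; exact hc
        rcases auxField_sq_case q M σ X hX2 with h1 | h1 <;>
          rcases auxField_sq_case q M τ X hX2 with h2 | h2 <;>
          simp [h1, h2, map_neg]
      · have hX2 : X ^ (2 * M) = 1 := by
          apply Subtype.ext; push_cast; exact hc
        obtain ⟨k, hk⟩ := hpow X hX2
        obtain ⟨a, ha⟩ := hpow (σ Z) (by rw [← map_pow, hZpow, map_one])
        obtain ⟨b, hb⟩ := hpow (τ Z) (by rw [← map_pow, hZpow, map_one])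
        have hcZ : σ (τ Z) = τ (σ Z) := by
          rw [hb, map_pow, ha, map_pow, hb, ← pow_mul, ← pow_mul, mul_comm a b]
        calc σ (τ X) = σ (τ Z) ^ k := by rw [hk, map_pow, map_pow]
        _ = τ (σ Z) ^ k := by rw [hcZ]
        _ = τ (σ X) := by rw [hk, map_pow, map_pow]

end

noncomputable section
open IntermediateField

set_option maxHeartbeats 1000000 in
set_option synthInstance.maxHeartbeats 400000 in
lemma exists_poly (q M : ℕ) (hq : 0 < q) (hM : 0 < M) (α β : ℂ)
    (hα : α ^ (2 * M) = (q : ℂ) ^ M) (hβ : β ^ (2 * M) = (q : ℂ) ^ M)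
    (hroot : Polynomial.aeval β (minpoly ℚ α) = 0) :
    ∃ f : Polynomial ℚ, Polynomial.aeval α f = β := by
  have hq0 : (0:ℝ) ≤ (q:ℝ) := by positivity
  set s : ℂ := ((Real.sqrt q : ℝ) : ℂ) with hsdef
  have hs2 : s ^ 2 = (q : ℂ) := by
    rw [hsdef]
    norm_cast
    rw [Real.sq_sqrt hq0]
  have hs0 : s ≠ 0 := by
    rw [hsdef, Ne, Complex.ofReal_eq_zero]
    have h1 : 0 < Real.sqrt q := Real.sqrt_pos.mpr (by exact_mod_cast hq)
    exact ne_of_gt h1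
  have hsK : s ∈ auxField q M := mem_auxField q M hM s (Or.inl hs2)
  have hs2M : s ^ (2 * M) = (q:ℂ) ^ M := by rw [pow_mul, hs2]
  have hη : ∀ x : ℂ, x ^ (2*M) = (q:ℂ)^M → x ∈ auxField q M := by
    intro x hx
    have h1 : (x / s) ^ (2*M) = 1 := by
      rw [div_pow, hx, hs2M, div_self]
      intro h2
      rw [pow_eq_zero_iff (by omega : M ≠ 0)] at h2
      exact_mod_cast (by omega : q ≠ 0) (by exact_mod_cast h2)
    have hmem := mem_auxField q M hM (x/s) (Or.inr h1)
    have h2 : x = s * (x / s) := by field_simp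
    rw [h2]; exact mul_mem hsK hmem
  have hαK := hη α hα
  have hβK := hη β hβ
  set A : auxField q M := ⟨α, hαK⟩ with hAdef
  set B : auxField q M := ⟨β, hβK⟩ with hBdef
  have hcoeA : algebraMap (auxField q M) ℂ A = α := rfl
  have hcoeB : algebraMap (auxField q M) ℂ B = β := rfl
  have hinj : Function.Injective (algebraMap (auxField q M) ℂ) :=
    (algebraMap (auxField q M) ℂ).injective
  have hmin : minpoly ℚ α = minpoly ℚ A := by
    rw [← hcoeA, minpoly.algebraMap_eq hinj]
  have hrootB : Polynomial.aeval B (minpoly ℚ A) = 0 := by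
    apply hinj
    rw [map_zero, ← Polynomial.aeval_algebraMap_apply, hcoeB, ← hmin]
    exact hroot
  have hAalg : IsAlgebraic ℚ A := (IsIntegral.of_finite ℚ A).isAlgebraic
  obtain ⟨τ, hτ⟩ := minpoly.exists_algEquiv_of_root' hAalg hrootB
  set E : IntermediateField ℚ (auxField q M) := ℚ⟮A⟯ with hEdef
  have hBE : B ∈ E := by
    rw [← IsGalois.fixedField_fixingSubgroup E]
    rintro ⟨σ, hσ⟩
    have hσA : σ A = A := by
      rw [IntermediateField.mem_fixingSubgroup_iff] at hσ
      exact hσ A (IntermediateField.mem_adjoin_simple_self ℚ A)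
    have hsmul : (⟨σ, hσ⟩ : E.fixingSubgroup) • B = σ B := rfl
    rw [hsmul, ← hτ, auxField_comm q M hM σ τ A, hσA]
  have hint : IsIntegral ℚ A := IsIntegral.of_finite ℚ A
  have hBad : B ∈ Algebra.adjoin ℚ {A} := by
    have h3 : E.toSubalgebra = Algebra.adjoin ℚ {A} :=
      IntermediateField.adjoin_simple_toSubalgebra_of_isAlgebraic hint.isAlgebraic
    rw [← h3]
    exact hBE
  rw [Algebra.adjoin_singleton_eq_range_aeval] at hBad
  obtain ⟨f, hf⟩ := hBad
  refine ⟨f, ?_⟩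
  have h4 : Polynomial.aeval A f = B := hf
  have h5 := congrArg (algebraMap (auxField q M) ℂ) h4
  rw [← Polynomial.aeval_algebraMap_apply, hcoeA, hcoeB] at h5
  exact h5

end


open scoped BigOperators

set_option maxHeartbeats 1000000 in
/-- With the hypotheses of the Frobenius-eigenvalues lemma, for `n` odd, `N > 0` and an
injective choice of `2n` indices, the products of `N`-th powers of the first `n` chosen
eigenvalues and of the last `n` chosen eigenvalues are different. -/
theorem frobenius_eigenvalues_no_power_relation
    (g : ℕ) (hg : 3 ≤ g) (q : ℕ) (hq : IsPrimePow q)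
    (μ : Fin (2*g) → ℂ)
    (hinj : Function.Injective μ)
    (halg : ∀ i, IsAlgebraic ℚ (μ i))
    (habs : ∀ i, ‖μ i‖ = Real.sqrt q)
    (hpair : ∀ i, μ i * μ (Fin.rev i) = (q : ℂ))
    (hgal : ∀ π : Equiv.Perm (Fin (2*g)), (∀ i, π (Fin.rev i) = Fin.rev (π i)) →
      ∀ P : MvPolynomial (Fin (2*g)) ℚ,
        MvPolynomial.aeval μ P = 0 → MvPolynomial.aeval (μ ∘ π) P = 0)
    (n N : ℕ) (hn : Odd n) (hnpos : 0 < n) (hN : 0 < N)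
    (j : Fin (n + n) → Fin (2*g)) (hjinj : Function.Injective j) :
    (∏ i : Fin n, μ (j (Fin.castAdd n i)) ^ N) ≠
      ∏ i : Fin n, μ (j (Fin.natAdd n i)) ^ N := by
  intro heq
  have hq2 : 2 ≤ q := hq.two_le
  have hqC : (q:ℂ) ≠ 0 := by
    have : q ≠ 0 := by omega
    exact_mod_cast this
  have hμ0 : ∀ i, μ i ≠ 0 := fun i h => hqC (by rw [← hpair i, h, zero_mul])
  have hrevne : ∀ i : Fin (2*g), Fin.rev i ≠ i := finRevNe (by omega)
  have hμrev : ∀ i, μ (Fin.rev i) = (q:ℂ) / μ i := fun i =>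
    eq_div_of_mul_eq (hμ0 i) (by rw [mul_comm]; exact hpair i)
  -- the two index sets
  set A := Finset.image (fun i : Fin n => j (Fin.castAdd n i)) Finset.univ with hAdef
  set B := Finset.image (fun i : Fin n => j (Fin.natAdd n i)) Finset.univ with hBdef
  have hinjA : Function.Injective (fun i : Fin n => j (Fin.castAdd n i)) := by
    intro a b h
    have h2 := hjinj h
    have h3 := congrArg Fin.val h2
    simp only [Fin.coe_castAdd] at h3
    exact Fin.ext h3
  have hinjB : Function.Injective (fun i : Fin n => j (Fin.natAdd n i)) := by
    intro a b h
    have h2 := hjinj h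
    have h3 := congrArg Fin.val h2
    simp only [Fin.coe_natAdd] at h3
    exact Fin.ext (by omega)
  have hcardA : A.card = n := by
    rw [hAdef, Finset.card_image_of_injective _ hinjA, Finset.card_univ, Fintype.card_fin]
  have hdisj : Disjoint A B := by
    rw [Finset.disjoint_left]
    rintro z hz hz'
    rw [hAdef, Finset.mem_image] at hz
    rw [hBdef, Finset.mem_image] at hz'
    obtain ⟨a, -, ha⟩ := hz
    obtain ⟨b, -, hb⟩ := hz'
    have h2 := hjinj (ha.trans hb.symm)
    have h3 := congrArg Fin.val h2
    simp only [Fin.coe_castAdd, Fin.coe_natAdd] at h3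
    have := a.isLt
    omega
  have hrelAB : ∏ z ∈ A, μ z ^ N = ∏ z ∈ B, μ z ^ N := by
    rw [hAdef, hBdef, Finset.prod_image (fun a _ b _ h => hinjA h),
      Finset.prod_image (fun a _ b _ h => hinjB h)]
    exact heq
  -- an asymmetric index exists
  have hex : ∃ x ∈ A, Fin.rev x ∉ A := by
    by_contra hcon
    push_neg at hcon
    have heven : Even n :=
      evenCardInvol n A Fin.rev hcardA hcon Fin.rev_rev (fun z _ => hrevne z)
    exact (Nat.not_even_iff_odd.mpr hn) heven
  obtain ⟨x, hxA, hxrA⟩ := hex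
  -- first Galois application : flip the pair of x
  have h0 : MvPolynomial.aeval μ
      (((∏ y ∈ A, MvPolynomial.X y ^ N) - ∏ y ∈ B, MvPolynomial.X y ^ N :
        MvPolynomial (Fin (2*g)) ℚ)) = 0 := by
    simp only [map_sub, map_prod, map_pow, MvPolynomial.aeval_X]
    rw [hrelAB, sub_self]
  have h1 := hgal (Equiv.swap x (Fin.rev x)) (flip_comm x) _ h0
  simp only [map_sub, map_prod, map_pow, MvPolynomial.aeval_X, Function.comp_apply,
    sub_eq_zero] at h1
  -- h1 : ∏ y ∈ A, μ (swap x (rev x) y) ^ N = ∏ y ∈ B, μ (swap x (rev x) y) ^ N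
  have hprodA : ∏ y ∈ A, μ (Equiv.swap x (Fin.rev x) y) ^ N
      = μ (Fin.rev x) ^ N * ∏ y ∈ A.erase x, μ y ^ N := by
    rw [← Finset.mul_prod_erase A _ hxA, Equiv.swap_apply_left]
    congr 1
    apply Finset.prod_congr rfl
    intro y hy
    have hy1 : y ≠ x := (Finset.mem_erase.1 hy).1
    have hy2 : y ≠ Fin.rev x := fun h => hxrA (h ▸ Finset.mem_of_mem_erase hy)
    rw [Equiv.swap_apply_of_ne_of_ne hy1 hy2]
  have hprodA' : ∏ y ∈ A, μ y ^ N = μ x ^ N * ∏ y ∈ A.erase x, μ y ^ N :=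
    (Finset.mul_prod_erase A _ hxA).symm
  have hu0 : ∏ y ∈ A.erase x, μ y ^ N ≠ 0 :=
    Finset.prod_ne_zero_iff.2 (fun y _ => pow_ne_zero _ (hμ0 y))
  -- key squared identity
  have hab : (μ x ^ N) ^ 2 = (μ (Fin.rev x) ^ N) ^ 2 := by
    by_cases hrB : Fin.rev x ∈ B
    · have hxB : x ∉ B := Finset.disjoint_left.1 hdisj hxA
      have hprodB : ∏ y ∈ B, μ (Equiv.swap x (Fin.rev x) y) ^ N
          = μ x ^ N * ∏ y ∈ B.erase (Fin.rev x), μ y ^ N := by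
        rw [← Finset.mul_prod_erase B _ hrB, Equiv.swap_apply_right]
        congr 1
        apply Finset.prod_congr rfl
        intro y hy
        have hy2 : y ≠ Fin.rev x := (Finset.mem_erase.1 hy).1
        have hy1 : y ≠ x := fun h => hxB (h ▸ Finset.mem_of_mem_erase hy)
        rw [Equiv.swap_apply_of_ne_of_ne hy1 hy2]
      have hprodB' : ∏ y ∈ B, μ y ^ N
          = μ (Fin.rev x) ^ N * ∏ y ∈ B.erase (Fin.rev x), μ y ^ N :=
        (Finset.mul_prod_erase B _ hrB).symm
      rw [hprodA, hprodB] at h1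
      rw [hprodA', hprodB'] at hrelAB
      set u := ∏ y ∈ A.erase x, μ y ^ N with hu
      set v := ∏ y ∈ B.erase (Fin.rev x), μ y ^ N with hv
      have hv0 : v ≠ 0 :=
        Finset.prod_ne_zero_iff.2 (fun y _ => pow_ne_zero _ (hμ0 y))
      have h2 : (μ x ^ N) ^ 2 * (u * v) = (μ (Fin.rev x) ^ N) ^ 2 * (u * v) := by
        calc (μ x ^ N) ^ 2 * (u * v) = (μ x ^ N * u) * (μ x ^ N * v) := by ring
        _ = (μ (Fin.rev x) ^ N * v) * (μ (Fin.rev x) ^ N * u) := by rw [hrelAB, ← h1]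
        _ = (μ (Fin.rev x) ^ N) ^ 2 * (u * v) := by ring
      exact mul_right_cancel₀ (mul_ne_zero hu0 hv0) h2
    · have hprodB : ∏ y ∈ B, μ (Equiv.swap x (Fin.rev x) y) ^ N = ∏ y ∈ B, μ y ^ N := by
        apply Finset.prod_congr rfl
        intro y hy
        have hy1 : y ≠ x := fun h => (Finset.disjoint_left.1 hdisj hxA) (h ▸ hy)
        have hy2 : y ≠ Fin.rev x := fun h => hrB (h ▸ hy)
        rw [Equiv.swap_apply_of_ne_of_ne hy1 hy2]
      rw [hprodA, hprodB, ← hrelAB, hprodA'] at h1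
      have h2 : μ (Fin.rev x) ^ N = μ x ^ N := mul_right_cancel₀ hu0 h1
      rw [h2]
  have hx4 : μ x ^ (2*(2*N)) = (q:ℂ) ^ (2*N) := by
    have h2 : μ x ^ N * μ (Fin.rev x) ^ N = (q:ℂ) ^ N := by rw [← mul_pow, hpair x]
    calc μ x ^ (2*(2*N)) = (μ x ^ N) ^ 2 * (μ x ^ N) ^ 2 := by ring
    _ = (μ x ^ N) ^ 2 * (μ (Fin.rev x) ^ N) ^ 2 := by rw [hab]
    _ = (μ x ^ N * μ (Fin.rev x) ^ N) ^ 2 := by ring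
    _ = ((q:ℂ) ^ N) ^ 2 := by rw [h2]
    _ = (q:ℂ) ^ (2*N) := by ring
  -- propagate to all indices
  have hall : ∀ y, μ y ^ (2*(2*N)) = (q:ℂ) ^ (2*N) := by
    intro y
    rcases eq_or_ne y x with rfl | hyx
    · exact hx4
    rcases eq_or_ne y (Fin.rev x) with rfl | hyrx
    · rw [hμrev x, div_pow, hx4, show 2*(2*N) = 2*N + 2*N by ring, pow_add,
        mul_div_assoc, div_self (pow_ne_zero _ hqC), mul_one]
    · have hab' : x ≠ y := fun h => hyx h.symm
      have hπ := pairSwap_comm hab' hyrx (hrevne x) (hrevne y)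
      have h0' : MvPolynomial.aeval μ
          ((MvPolynomial.X x ^ (2*(2*N)) - MvPolynomial.C ((q:ℚ) ^ (2*N)) :
            MvPolynomial (Fin (2*g)) ℚ)) = 0 := by
        simp only [map_sub, map_pow, MvPolynomial.aeval_X, MvPolynomial.aeval_C]
        rw [hx4]
        push_cast
        ring
      have h1' := hgal (pairSwap x y) hπ _ h0'
      simp only [map_sub, map_pow, MvPolynomial.aeval_X, MvPolynomial.aeval_C,
        Function.comp_apply, sub_eq_zero] at h1'
      rw [pairSwap_apply_a hab' hyrx (hrevne x) (hrevne y)] at h1'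
      rw [h1']
      push_cast
      ring
  -- three indices in pairwise distinct pairs
  have h6 : 6 ≤ 2*g := by omega
  set x₁ : Fin (2*g) := ⟨0, by omega⟩ with hx1def
  set x₂ : Fin (2*g) := ⟨1, by omega⟩ with hx2def
  set x₃ : Fin (2*g) := ⟨2, by omega⟩ with hx3def
  have hval : ∀ (i : Fin (2*g)), (Fin.rev i).val = 2*g - 1 - i.val := by
    intro i
    rw [Fin.val_rev]
    omega
  have h12 : x₁ ≠ x₂ := fun h => by simpa [hx1def, hx2def, Fin.ext_iff] using h
  have h23 : x₂ ≠ x₃ := fun h => by simpa [hx2def, hx3def, Fin.ext_iff] using h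
  have h2r1 : x₂ ≠ Fin.rev x₁ := fun h => by
    have := congrArg Fin.val h
    rw [hval] at this
    simp [hx1def, hx2def] at this
    omega
  have h3r2 : x₃ ≠ Fin.rev x₂ := fun h => by
    have := congrArg Fin.val h
    rw [hval] at this
    simp [hx2def, hx3def] at this
    omega
  -- transfer the minimal polynomial root to μ x₂
  have hπ₁ := pairSwap_comm h12 h2r1 (hrevne x₁) (hrevne x₂)
  have hP1 : MvPolynomial.aeval μ
      (Polynomial.aeval ((MvPolynomial.X x₁ : MvPolynomial (Fin (2*g)) ℚ)) (minpoly ℚ (μ x₁))) = 0 := by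
    rw [← Polynomial.aeval_algHom_apply (MvPolynomial.aeval μ) ((MvPolynomial.X x₁ : MvPolynomial (Fin (2*g)) ℚ))
      (minpoly ℚ (μ x₁)), MvPolynomial.aeval_X]
    exact minpoly.aeval ℚ (μ x₁)
  have h2 := hgal (pairSwap x₁ x₂) hπ₁ _ hP1
  rw [← Polynomial.aeval_algHom_apply (MvPolynomial.aeval (μ ∘ pairSwap x₁ x₂))
    ((MvPolynomial.X x₁ : MvPolynomial (Fin (2*g)) ℚ)) (minpoly ℚ (μ x₁)), MvPolynomial.aeval_X] at h2
  have hroot2 : Polynomial.aeval (μ x₂) (minpoly ℚ (μ x₁)) = 0 := by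
    have hc : (μ ∘ pairSwap x₁ x₂) x₁ = μ x₂ := by
      rw [Function.comp_apply, pairSwap_apply_a h12 h2r1 (hrevne x₁) (hrevne x₂)]
    rw [hc] at h2
    exact h2
  -- the abelian-Galois step
  obtain ⟨f, hf⟩ := exists_poly q (2*N) (by omega) (by omega) (μ x₁) (μ x₂)
    (hall x₁) (hall x₂) hroot2
  -- final Galois application
  have hπ₂ := pairSwap_comm h23 h3r2 (hrevne x₂) (hrevne x₃)
  have hP2 : MvPolynomial.aeval μ
      (MvPolynomial.X x₂ - Polynomial.aeval ((MvPolynomial.X x₁ : MvPolynomial (Fin (2*g)) ℚ)) f) = 0 := by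
    rw [map_sub, MvPolynomial.aeval_X,
      ← Polynomial.aeval_algHom_apply (MvPolynomial.aeval μ) ((MvPolynomial.X x₁ : MvPolynomial (Fin (2*g)) ℚ)) f,
      MvPolynomial.aeval_X, hf, sub_self]
  have h3 := hgal (pairSwap x₂ x₃) hπ₂ _ hP2
  rw [map_sub, MvPolynomial.aeval_X,
    ← Polynomial.aeval_algHom_apply (MvPolynomial.aeval (μ ∘ pairSwap x₂ x₃))
      ((MvPolynomial.X x₁ : MvPolynomial (Fin (2*g)) ℚ)) f, MvPolynomial.aeval_X, sub_eq_zero] at h3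
  have hc2 : (μ ∘ pairSwap x₂ x₃) x₂ = μ x₃ := by
    rw [Function.comp_apply, pairSwap_apply_a h23 h3r2 (hrevne x₂) (hrevne x₃)]
  have hc1 : (μ ∘ pairSwap x₂ x₃) x₁ = μ x₁ := by
    rw [Function.comp_apply]
    congr 1
    apply pairSwap_apply_other h23 h3r2 (hrevne x₂) (hrevne x₃)
    · exact h12
    · intro h
      apply absurd (congrArg Fin.val h)
      simp [hx1def, hx3def]
    · intro h
      have := congrArg Fin.val h
      rw [hval] at this
      simp [hx1def, hx2def] at this
      omega
    · intro h
      have := congrArg Fin.val h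
      rw [hval] at this
      simp [hx1def, hx3def] at this
      omega
  rw [hc1, hc2, hf] at h3
  have hfinal : x₃ = x₂ := hinj h3
  apply absurd (congrArg Fin.val hfinal)
  simp [hx2def, hx3def]
end

section
/- With the hypotheses of the Frobenius eigenvalues lemma (g ≥ 3, Galois group (ℤ/2ℤ)^g ⋊ S_g), if λ, ν₁, ν₂ are three distinct roots of f_v(x), then λ² ≠ ν₁ν₂. -/
open scoped BigOperators

/-- With the hypotheses of the Frobenius-eigenvalues lemma, for any three distinct
eigenvalues `λ = μ a`, `ν₁ = μ b`, `ν₂ = μ c` one has `λ² ≠ ν₁ν₂`. -/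
theorem frobenius_eigenvalues_no_square_relation
    (g : ℕ) (hg : 3 ≤ g) (q : ℕ) (hq : IsPrimePow q)
    (μ : Fin (2*g) → ℂ)
    (hinj : Function.Injective μ)
    (halg : ∀ i, IsAlgebraic ℚ (μ i))
    (habs : ∀ i, ‖μ i‖ = Real.sqrt q)
    (hpair : ∀ i, μ i * μ (Fin.rev i) = (q : ℂ))
    (hgal : ∀ π : Equiv.Perm (Fin (2*g)), (∀ i, π (Fin.rev i) = Fin.rev (π i)) →
      ∀ P : MvPolynomial (Fin (2*g)) ℚ,
        MvPolynomial.aeval μ P = 0 → MvPolynomial.aeval (μ ∘ π) P = 0)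
    (a b c : Fin (2*g)) (hab : a ≠ b) (hac : a ≠ c) (hbc : b ≠ c) :
    μ a ^ 2 ≠ μ b * μ c := by
  intro h
  have hq0 : (q : ℂ) ≠ 0 := Nat.cast_ne_zero.mpr hq.pos.ne'
  have hμ0 : ∀ i, μ i ≠ 0 := fun i hi => hq0 (by rw [← hpair i, hi, zero_mul])
  have hrevne : ∀ i : Fin (2*g), i ≠ Fin.rev i := by
    intro i hi
    have := congrArg Fin.val hi
    simp [Fin.rev] at this
    omega
  -- the sign-flip at the pair {i, rev i} commutes with rev
  have hswap : ∀ i j : Fin (2*g), Equiv.swap i (Fin.rev i) (Fin.rev j)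
      = Fin.rev (Equiv.swap i (Fin.rev i) j) := by
    intro i j
    rcases eq_or_ne j i with rfl | hji
    · simp
    rcases eq_or_ne j (Fin.rev i) with rfl | hji'
    · simp
    have h1 : Fin.rev j ≠ i := fun hh => hji' (by rw [← hh, Fin.rev_rev])
    have h2 : Fin.rev j ≠ Fin.rev i := fun hh => hji (Fin.rev_injective hh)
    rw [Equiv.swap_apply_of_ne_of_ne h1 h2, Equiv.swap_apply_of_ne_of_ne hji hji']
  -- transporting the quadratic relation by a Galois element
  have step : ∀ (x y z : Fin (2*g)) (π : Equiv.Perm (Fin (2*g))),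
      (∀ i, π (Fin.rev i) = Fin.rev (π i)) →
      μ x ^ 2 = μ y * μ z → μ (π x) ^ 2 = μ (π y) * μ (π z) := by
    intro x y z π hπ hxyz
    have h0 : MvPolynomial.aeval μ
        (MvPolynomial.X x ^ 2 - MvPolynomial.X y * MvPolynomial.X z :
          MvPolynomial (Fin (2*g)) ℚ) = 0 := by
      simp [sub_eq_zero, hxyz]
    have h1 := hgal π hπ _ h0
    simpa [Function.comp, sub_eq_zero] using h1
  rcases eq_or_ne c (Fin.rev b) with rfl | hcb
  · -- here μ b * μ c = q, so μ a ^ 2 = q = μ a * μ (rev a)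
    have h1 : μ a * μ a = μ a * μ (Fin.rev a) := by
      rw [hpair a, ← hpair b, ← h, sq]
    exact hrevne a (hinj (mul_left_cancel₀ (hμ0 a) h1))
  rcases eq_or_ne b (Fin.rev a) with rfl | hba
  · -- flip the pair of c; it fixes a and b = rev a
    have hac' : a ≠ Fin.rev c := fun hh => hbc (by
      rw [hh, Fin.rev_rev])
    have hbc' : Fin.rev a ≠ Fin.rev c := fun hh => hac (Fin.rev_injective hh)
    have h2 := step a (Fin.rev a) c (Equiv.swap c (Fin.rev c)) (hswap c) h
    rw [Equiv.swap_apply_of_ne_of_ne hac hac',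
        Equiv.swap_apply_of_ne_of_ne hbc hbc', Equiv.swap_apply_left] at h2
    have h3 : μ (Fin.rev a) * μ c = μ (Fin.rev a) * μ (Fin.rev c) := by
      rw [← h, h2]
    exact hrevne c (hinj (mul_left_cancel₀ (hμ0 _) h3))
  · -- flip the pair of b; it fixes a and c
    have hab' : a ≠ Fin.rev b := fun hh => hba (by rw [hh, Fin.rev_rev])
    have hcb' : c ≠ Fin.rev b := hcb
    have h2 := step a b c (Equiv.swap b (Fin.rev b)) (hswap b) h
    rw [Equiv.swap_apply_of_ne_of_ne hab hab',
        Equiv.swap_apply_of_ne_of_ne hbc.symm hcb', Equiv.swap_apply_left] at h2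
    have h3 : μ b * μ c = μ (Fin.rev b) * μ c := by rw [← h, h2]
    exact hrevne b (hinj (mul_right_cancel₀ (hμ0 c) h3))
end

section
/- With the hypotheses of the Frobenius eigenvalues lemma (g ≥ 3, Galois group (ℤ/2ℤ)^g ⋊ S_g), if λ₁, λ₂, λ₃, λ₄ are four distinct roots of f_v(x) satisfying λ₁λ₂ = λ₃λ₄, then λ₂ is the complex conjugate of λ₁ and λ₄ is the complex conjugate of λ₃ (equivalently λ₁λ₂ = λ₃λ₄ = q). -/
open scoped BigOperators

/-- With the hypotheses of the Frobenius-eigenvalues lemma, if four distinct eigenvalues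
satisfy `λ₁λ₂ = λ₃λ₄`, then `λ₂` is the complex conjugate of `λ₁` and `λ₄` is the complex
conjugate of `λ₃`. -/
theorem frobenius_eigenvalues_product_pairs
    (g : ℕ) (hg : 3 ≤ g) (q : ℕ) (hq : IsPrimePow q)
    (μ : Fin (2*g) → ℂ)
    (hinj : Function.Injective μ)
    (halg : ∀ i, IsAlgebraic ℚ (μ i))
    (habs : ∀ i, ‖μ i‖ = Real.sqrt q)
    (hpair : ∀ i, μ i * μ (Fin.rev i) = (q : ℂ))
    (hgal : ∀ π : Equiv.Perm (Fin (2*g)), (∀ i, π (Fin.rev i) = Fin.rev (π i)) →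
      ∀ P : MvPolynomial (Fin (2*g)) ℚ,
        MvPolynomial.aeval μ P = 0 → MvPolynomial.aeval (μ ∘ π) P = 0)
    (a b c d : Fin (2*g)) (hab : a ≠ b) (hac : a ≠ c) (had : a ≠ d)
    (hbc : b ≠ c) (hbd : b ≠ d) (hcd : c ≠ d)
    (hprod : μ a * μ b = μ c * μ d) :
    μ b = (starRingEnd ℂ) (μ a) ∧ μ d = (starRingEnd ℂ) (μ c) := by
  have hq0 : 0 < q := hq.pos
  have hne : ∀ i, μ i ≠ 0 := by
    intro i h
    have h1 := habs i
    rw [h, norm_zero] at h1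
    have h2 : (0:ℝ) < Real.sqrt q := Real.sqrt_pos.mpr (by exact_mod_cast hq0)
    linarith
  have hconj : ∀ i, μ (Fin.rev i) = (starRingEnd ℂ) (μ i) := by
    intro i
    have h1 := hpair i
    have h2 : μ i * (starRingEnd ℂ) (μ i) = (q:ℂ) := by
      rw [Complex.mul_conj]
      rw [← Complex.sq_norm, habs i, Real.sq_sqrt (by positivity)]
      norm_cast
    exact mul_left_cancel₀ (hne i) (h1.trans h2.symm)
  have hrev : ∀ i : Fin (2*g), Fin.rev i ≠ i := by
    intro i h
    have h1 : (Fin.rev i : ℕ) = i := congrArg Fin.val h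
    rw [Fin.val_rev] at h1
    have := i.isLt
    omega
  have hsw : ∀ (i j : Fin (2*g)),
      Equiv.swap i (Fin.rev i) (Fin.rev j) = Fin.rev (Equiv.swap i (Fin.rev i) j) := by
    intro i j
    rcases eq_or_ne j i with rfl | h1
    · simp
    rcases eq_or_ne j (Fin.rev i) with rfl | h2
    · simp
    · rw [Equiv.swap_apply_of_ne_of_ne h1 h2,
        Equiv.swap_apply_of_ne_of_ne
          (fun h => h2 (by rw [← Fin.rev_rev j, h]))
          (fun h => h1 (Fin.rev_injective h))]
  have hkey : ∀ (i : Fin (2*g)) (P : MvPolynomial (Fin (2*g)) ℚ),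
      MvPolynomial.aeval μ P = 0 →
      MvPolynomial.aeval (μ ∘ (Equiv.swap i (Fin.rev i))) P = 0 :=
    fun i P h => hgal _ (fun j => hsw i j) P h
  have haev : ∀ (ν : Fin (2*g) → ℂ) (i j k l : Fin (2*g)),
      MvPolynomial.aeval ν (MvPolynomial.X i * MvPolynomial.X j
        - MvPolynomial.X k * MvPolynomial.X l : MvPolynomial (Fin (2*g)) ℚ)
        = ν i * ν j - ν k * ν l := by
    intro ν i j k l; simp
  -- main auxiliary argument: the case x = rev a leads to contradiction if b ≠ rev a
  have main : ∀ x y : Fin (2*g), a ≠ x → a ≠ y → b ≠ x → b ≠ y → x ≠ y →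
      b ≠ Fin.rev a → μ a * μ b = μ x * μ y → x = Fin.rev a → False := by
    intro x y hax hay hbx hby hxy hba E0 hx
    subst hx
    have h1 : MvPolynomial.aeval μ (MvPolynomial.X a * MvPolynomial.X b
        - MvPolynomial.X (Fin.rev a) * MvPolynomial.X y : MvPolynomial (Fin (2*g)) ℚ) = 0 := by
      rw [haev, E0]; ring
    have h2 := hkey a _ h1
    rw [haev] at h2
    simp only [Function.comp_apply] at h2
    rw [Equiv.swap_apply_left, Equiv.swap_apply_right,
      Equiv.swap_apply_of_ne_of_ne hab.symm hba,
      Equiv.swap_apply_of_ne_of_ne hay.symm hxy.symm] at h2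
    have E1 : μ (Fin.rev a) * μ b = μ a * μ y := sub_eq_zero.mp h2
    have hbb : μ b * μ b = μ y * μ y := by
      apply mul_left_cancel₀ (mul_ne_zero (hne a) (hne (Fin.rev a)))
      linear_combination (μ (Fin.rev a) * μ b) * E0 + (μ (Fin.rev a) * μ y) * E1
    have hby2 : μ b = - μ y := by
      have h3 : (μ b - μ y) * (μ b + μ y) = 0 := by linear_combination hbb
      rcases mul_eq_zero.mp h3 with h | h
      · exact absurd (hinj (sub_eq_zero.mp h)) hby
      · exact eq_neg_of_add_eq_zero_left h
    by_cases hyb : y = Fin.rev b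
    · subst hyb
      have hb2 : μ b * μ b = -(q:ℂ) := by
        linear_combination μ b * hby2 - hpair b
      have h6 : μ a * μ b = (-μ (Fin.rev a)) * μ b := by
        linear_combination E0 + μ (Fin.rev a) * hby2
      have hab0 : μ a = -μ (Fin.rev a) := mul_right_cancel₀ (hne b) h6
      have ha2 : μ a * μ a = -(q:ℂ) := by
        linear_combination μ a * hab0 - hpair a
      have h4 : (μ a - μ b) * (μ a + μ b) = 0 := by linear_combination ha2 - hb2
      rcases mul_eq_zero.mp h4 with h | h
      · exact hab (hinj (sub_eq_zero.mp h))
      · have h7 : μ a = μ (Fin.rev b) := by linear_combination h - hby2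
        exact hay (hinj h7)
    · have hP2 : MvPolynomial.aeval μ (MvPolynomial.X b + MvPolynomial.X y
          : MvPolynomial (Fin (2*g)) ℚ) = 0 := by
        simp only [map_add, MvPolynomial.aeval_X]
        rw [hby2]; ring
      have h5 := hkey b _ hP2
      simp only [map_add, MvPolynomial.aeval_X, Function.comp_apply] at h5
      rw [Equiv.swap_apply_left, Equiv.swap_apply_of_ne_of_ne hby.symm hyb] at h5
      have h8 : μ (Fin.rev b) = μ b := by linear_combination h5 - hby2
      exact hrev b (hinj h8)
  have hbrev : b = Fin.rev a := by
    by_contra hba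
    by_cases hc : c = Fin.rev a
    · exact main c d hac had hbc hbd hcd hba hprod hc
    by_cases hd : d = Fin.rev a
    · exact main d c had hac hbd hbc (Ne.symm hcd) hba (hprod.trans (mul_comm _ _)) hd
    · have h1 : MvPolynomial.aeval μ (MvPolynomial.X a * MvPolynomial.X b
          - MvPolynomial.X c * MvPolynomial.X d : MvPolynomial (Fin (2*g)) ℚ) = 0 := by
        rw [haev, hprod]; ring
      have h2 := hkey a _ h1
      rw [haev] at h2
      simp only [Function.comp_apply] at h2
      rw [Equiv.swap_apply_left,
        Equiv.swap_apply_of_ne_of_ne hab.symm hba,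
        Equiv.swap_apply_of_ne_of_ne hac.symm hc,
        Equiv.swap_apply_of_ne_of_ne had.symm hd] at h2
      have h3 : μ (Fin.rev a) = μ a :=
        mul_right_cancel₀ (hne b) (by linear_combination h2 - hprod)
      exact hrev a (hinj h3)
  subst hbrev
  have hdrev : d = Fin.rev c := by
    have h1 : μ c * μ d = μ c * μ (Fin.rev c) := by
      rw [hpair c, ← hprod, hpair a]
    exact hinj (mul_left_cancel₀ (hne c) h1)
  subst hdrev
  exact ⟨hconj a, hconj c⟩
end

section
/- Let ℓ be an odd prime, n a positive integer, h an element of the group of orthogonal similitudes CGO_{2n}(𝔽_ℓ) with multiplier κ (so hᵗMh = κM for the defining symmetric matrix M). Then the map ν ↦ κ/ν is an involution of the multiset of eigenvalues of h in 𝔽̄_ℓ, and there exist λ ∈ 𝔽̄_ℓˣ with λ² = κ, an integer k ∈ {n−1, n}, and ξ₁,…,ξ_k ∈ 𝔽̄_ℓˣ such that the eigenvalues of h are either {λ, −λ, λξ₁,…,λξ_k, λξ₁⁻¹,…,λξ_k⁻¹} (if k = n−1) or {λξ₁,…,λξ_n, λξ₁⁻¹,…,λξ_n⁻¹} (if k =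 n). -/
open scoped BigOperators
open Matrix

open Polynomial

section Helpers

lemma aux_eval_charpoly {m : Type*} [DecidableEq m] [Fintype m] {R : Type*} [CommRing R]
    (A : Matrix m m R) (x : R) :
    A.charpoly.eval x = (x • (1 : Matrix m m R) - A).det := by
  rw [Matrix.charpoly, _root_.eval_det, Matrix.matPolyEquiv_charmatrix]
  simp only [Polynomial.eval_sub, Polynomial.eval_X, Polynomial.eval_C]
  congr 1
  ext i j
  simp [Matrix.scalar_apply, Matrix.one_apply, Matrix.diagonal_apply, mul_comm]

lemma aux_enum {α : Type*} (k : ℕ) (u : Multiset α) (h : Multiset.card u = k) :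
    ∃ g : Fin k → α, Multiset.map g (Finset.univ : Finset (Fin k)).val = u := by
  have hl : u.toList.length = k := by simp [h]
  subst hl
  exact ⟨u.toList.get, by rw [Fin.univ_val_map, List.ofFn_get]; exact u.coe_toList⟩


end Helpers


lemma aux_pairup_nofix {K : Type*} [Field K] (v : Multiset K)
    (hinv : Multiset.map (fun x => x⁻¹) v = v) (hfix : ∀ x ∈ v, x⁻¹ ≠ x) :
    ∃ w : Multiset K, (∀ x ∈ w, x ∈ v) ∧ v = w + Multiset.map (fun x => x⁻¹) w := by
  classical
  induction v using Multiset.strongInductionOn with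
  | ih v ih =>
    rcases Multiset.empty_or_exists_mem v with rfl | ⟨a, ha⟩
    · exact ⟨0, by simp⟩
    · have hane : a⁻¹ ≠ a := hfix a ha
      have hainv : a⁻¹ ∈ v := by
        rw [← hinv]; exact Multiset.mem_map_of_mem _ ha
      have hainv' : a⁻¹ ∈ v.erase a := (Multiset.mem_erase_of_ne hane).mpr hainv
      set v' := (v.erase a).erase a⁻¹ with hv'
      have hvlt : v' < v :=
        lt_of_le_of_lt (Multiset.erase_le _ _) (Multiset.erase_lt.mpr ha)
      have hcons : v = a ::ₘ a⁻¹ ::ₘ v' := by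
        rw [hv', Multiset.cons_erase hainv', Multiset.cons_erase ha]
      have hinv' : Multiset.map (fun x => x⁻¹) v' = v' := by
        rw [hv', Multiset.map_erase _ inv_injective, Multiset.map_erase _ inv_injective,
          hinv, inv_inv, Multiset.erase_comm]
      have hfix' : ∀ x ∈ v', x⁻¹ ≠ x := fun x hx =>
        hfix x (Multiset.mem_of_mem_erase (Multiset.mem_of_mem_erase hx))
      obtain ⟨w', hw'mem, hw'⟩ := ih v' hvlt hinv' hfix'
      refine ⟨a ::ₘ w', ?_, ?_⟩
      · intro x hx
        rcases Multiset.mem_cons.mp hx with rfl | hx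
        · exact ha
        · exact Multiset.mem_of_mem_erase (Multiset.mem_of_mem_erase (hw'mem x hx))
      · rw [hcons, hw', Multiset.map_cons]
        simp only [Multiset.cons_add, Multiset.add_cons]
        exact Multiset.cons_swap _ _ _

lemma aux_pairup {K : Type*} [Field K] (h2 : (1:K) ≠ -1) (t : Multiset K)
    (h0 : (0:K) ∉ t) (hinv : Multiset.map (fun x => x⁻¹) t = t)
    (heven : Even (Multiset.card t)) :
    ∃ u : Multiset K, (∀ x ∈ u, x ≠ 0) ∧
      (t = u + Multiset.map (fun x => x⁻¹) u ∨
       t = 1 ::ₘ (-1) ::ₘ (u + Multiset.map (fun x => x⁻¹) u)) := by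
  classical
  set a := Multiset.count (1:K) t with hadef
  set b := Multiset.count (-1:K) t with hbdef
  set v := t.filter (fun x => x ≠ 1 ∧ x ≠ -1) with hvdef
  have hteq : t = Multiset.replicate a 1 + Multiset.replicate b (-1) + v := by
    rw [hadef, hbdef, hvdef]
    ext x
    by_cases h1 : x = (1:K)
    · subst h1
      simp [Multiset.count_replicate, Multiset.count_filter, h2, Ne.symm h2]
    · by_cases hm : x = (-1:K)
      · subst hm
        simp [Multiset.count_replicate, Multiset.count_filter, h2, Ne.symm h2]
      · simp [Multiset.count_replicate, Multiset.count_filter, h1, hm, Ne.symm h1, Ne.symm hm]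
  have hcnt : ∀ (s : Multiset K) (x : K),
      Multiset.count x (Multiset.map (fun y => y⁻¹) s) = Multiset.count x⁻¹ s := by
    intro s x
    conv_lhs => rw [← inv_inv x]
    exact Multiset.count_map_eq_count' _ s inv_injective x⁻¹
  have htc : ∀ x : K, Multiset.count x⁻¹ t = Multiset.count x t := by
    intro x
    conv_rhs => rw [← hinv]
    rw [hcnt]
  have hvinv : Multiset.map (fun x => x⁻¹) v = v := by
    rw [hvdef]
    ext x
    rw [hcnt]
    have h1 : x⁻¹ = (1:K) ↔ x = 1 := inv_eq_one
    have hm : x⁻¹ = (-1:K) ↔ x = -1 := by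
      rw [inv_eq_iff_eq_inv, inv_neg, inv_one]
    simp only [Multiset.count_filter]
    split
    · next h =>
        rw [htc, if_pos ⟨fun hh => h.1 (h1.mpr hh), fun hh => h.2 (hm.mpr hh)⟩]
    · next h =>
        rw [if_neg (fun hc => h ⟨fun hh => hc.1 (h1.mp hh), fun hh => hc.2 (hm.mp hh)⟩)]
  have hvfix : ∀ x ∈ v, x⁻¹ ≠ x := by
    intro x hx hfx
    have hxt := Multiset.mem_filter.mp hx
    have hx0 : x ≠ 0 := fun h => h0 (h ▸ hxt.1)
    have : x * x = 1 := by nth_rewrite 1 [← hfx]; exact inv_mul_cancel₀ hx0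
    rcases mul_self_eq_one_iff.mp this with h | h
    · exact hxt.2.1 h
    · exact hxt.2.2 h
  obtain ⟨w, hwmem, hw⟩ := aux_pairup_nofix v hvinv hvfix
  have hw0 : ∀ x ∈ w, x ≠ 0 := by
    intro x hx h
    exact h0 (h ▸ (Multiset.mem_filter.mp (hwmem x hx)).1)
  have hcardt : Multiset.card t = a + b + (Multiset.card w + Multiset.card w) := by
    rw [hteq, hw]; simp
  have heab : Even (a + b) := by
    rcases heven with ⟨m, hm⟩
    rw [hcardt] at hm
    exact ⟨m - Multiset.card w, by omega⟩
  have hrepinv : ∀ (c d : ℕ) (w' : Multiset K),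
      Multiset.map (fun x => x⁻¹) (Multiset.replicate c (1:K) + Multiset.replicate d (-1) + w')
        = Multiset.replicate c (1:K) + Multiset.replicate d (-1)
            + Multiset.map (fun x => x⁻¹) w' := by
    intro c d w'
    simp [Multiset.map_replicate, inv_neg]
  by_cases hae : Even a
  · have hbe : Even b := (Nat.even_add.mp heab).mp hae
    obtain ⟨c, hc⟩ := hae
    obtain ⟨d, hd⟩ := hbe
    refine ⟨Multiset.replicate c 1 + Multiset.replicate d (-1) + w, ?_, Or.inl ?_⟩
    · intro x hx
      rcases Multiset.mem_add.mp hx with hx | hx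
      · rcases Multiset.mem_add.mp hx with hx | hx
        · rw [Multiset.eq_of_mem_replicate hx]; exact one_ne_zero
        · rw [Multiset.eq_of_mem_replicate hx]; exact neg_ne_zero.mpr one_ne_zero
      · exact hw0 x hx
    · rw [hrepinv, hteq, hw, hc, hd, Multiset.replicate_add, Multiset.replicate_add]
      abel
  · have hbo : ¬ Even b := fun hbe => hae ((Nat.even_add.mp heab).mpr hbe)
    obtain ⟨c, hc⟩ := Nat.not_even_iff_odd.mp hae
    obtain ⟨d, hd⟩ := Nat.not_even_iff_odd.mp hbo
    refine ⟨Multiset.replicate c 1 + Multiset.replicate d (-1) + w, ?_, Or.inr ?_⟩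
    · intro x hx
      rcases Multiset.mem_add.mp hx with hx | hx
      · rcases Multiset.mem_add.mp hx with hx | hx
        · rw [Multiset.eq_of_mem_replicate hx]; exact one_ne_zero
        · rw [Multiset.eq_of_mem_replicate hx]; exact neg_ne_zero.mpr one_ne_zero
      · exact hw0 x hx
    · rw [hrepinv, hteq, hw, hc, hd]
      have e1 : 2 * c + 1 = (c + c) + 1 := by ring
      have e2 : 2 * d + 1 = (d + d) + 1 := by ring
      rw [e1, e2, Multiset.replicate_succ, Multiset.replicate_succ,
        Multiset.replicate_add, Multiset.replicate_add,
        ← Multiset.singleton_add, ← Multiset.singleton_add,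
        ← Multiset.singleton_add, ← Multiset.singleton_add]
      abel

section Main

variable {K : Type*} [Field K] [IsAlgClosed K]

theorem main_split (n : ℕ) (hn : 1 ≤ n) (h2 : (1:K) ≠ -1)
    (Mb A : Matrix (Fin (2*n)) (Fin (2*n)) K) (c : K) (hc0 : c ≠ 0)
    (hMb0 : Mb.det ≠ 0) (hA0 : A.det ≠ 0)
    (hsimK : Aᵀ * Mb * A = c • Mb) :
    (Multiset.map (fun ν => c / ν) A.charpoly.roots = A.charpoly.roots) ∧
    ∃ lam : Kˣ, (lam : K) ^ 2 = c ∧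
      ((∃ ξ : Fin (n-1) → Kˣ,
          A.charpoly.roots = (lam : K) ::ₘ (-(lam : K)) ::ₘ
            ((Multiset.map (fun i => (lam : K) * ((ξ i : Kˣ) : K))
                (Finset.univ : Finset (Fin (n-1))).val) +
              Multiset.map (fun i => (lam : K) * (((ξ i)⁻¹ : Kˣ) : K))
                (Finset.univ : Finset (Fin (n-1))).val)) ∨
      (∃ ξ : Fin n → Kˣ,
          A.charpoly.roots =
            (Multiset.map (fun i => (lam : K) * ((ξ i : Kˣ) : K))
                (Finset.univ : Finset (Fin n)).val) +
              Multiset.map (fun i => (lam : K) * (((ξ i)⁻¹ : Kˣ) : K))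
                (Finset.univ : Finset (Fin n)).val)) := by
  classical
  set p := A.charpoly with hp
  set s := p.roots with hs
  have hmonic : p.Monic := A.charpoly_monic
  have hdeg : p.natDegree = 2*n := by
    rw [hp, Matrix.charpoly_natDegree_eq_dim]; simp
  have hcard : Multiset.card s = 2*n := by
    rw [hs, ← hdeg]
    exact (Polynomial.splits_iff_card_roots).mp (IsAlgClosed.splits p)
  have hprod : (s.map (fun a => X - C a)).prod = p :=
    Polynomial.prod_multiset_X_sub_C_of_monic_of_roots_card_eq hmonic (by rw [← hs, hcard, hdeg])
  have hAunit : IsUnit A.det := isUnit_iff_ne_zero.mpr hA0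
  have hAA : A * A⁻¹ = 1 := Matrix.mul_nonsing_inv A hAunit
  have hAA' : A⁻¹ * A = 1 := Matrix.nonsing_inv_mul A hAunit
  -- eval of p as a product
  have hevalp : ∀ x : K, p.eval x = (s.map (fun ν => x - ν)).prod := by
    intro x
    rw [← hprod, Polynomial.eval_multiset_prod, Multiset.map_map]
    simp [Function.comp]
  -- det A = s.prod
  have hdetA_eq : A.det = s.prod := by
    have h1 : p.eval 0 = (-A).det := by
      rw [aux_eval_charpoly]; simp
    have h2' : (-A).det = A.det := by
      rw [Matrix.det_neg, show Fintype.card (Fin (2*n)) = 2*n from Fintype.card_fin _,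
        (even_two_mul n).neg_one_pow, one_mul]
    have h3 : p.eval 0 = s.prod := by
      rw [hevalp]
      have : (s.map (fun ν => (0:K) - ν)) = s.map Neg.neg := by
        apply Multiset.map_congr rfl; intro x _; simp
      rw [this, Multiset.prod_map_neg, hcard, (even_two_mul n).neg_one_pow, one_mul]
    rw [← h3, h1]; exact h2'.symm
  have hzero : (0:K) ∉ s := fun h =>
    hA0 (by rw [hdetA_eq]; exact Multiset.prod_eq_zero h)
  -- charpoly of c • A⁻¹ equals p
  have hpq : (c • A⁻¹).charpoly = p := by
    apply Polynomial.funext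
    intro x
    rw [aux_eval_charpoly, aux_eval_charpoly]
    have hAtM : Aᵀ * Mb = c • (Mb * A⁻¹) := by
      have h := congrArg (fun X => X * A⁻¹) hsimK
      simp only [Matrix.mul_assoc, hAA, Matrix.mul_one, Matrix.smul_mul] at h
      exact h
    have key : Mb * (x • (1 : Matrix (Fin (2*n)) (Fin (2*n)) K) - c • A⁻¹)
        = (x • (1 : Matrix (Fin (2*n)) (Fin (2*n)) K) - Aᵀ) * Mb := by
      rw [Matrix.mul_sub, Matrix.sub_mul, Matrix.mul_smul, Matrix.mul_one,
        Matrix.smul_mul, Matrix.one_mul, Matrix.mul_smul, hAtM]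
    have hdets := congrArg Matrix.det key
    rw [Matrix.det_mul, Matrix.det_mul] at hdets
    have htr : (x • (1 : Matrix (Fin (2*n)) (Fin (2*n)) K) - Aᵀ).det
        = (x • (1 : Matrix (Fin (2*n)) (Fin (2*n)) K) - A).det := by
      rw [show x • (1 : Matrix (Fin (2*n)) (Fin (2*n)) K) - Aᵀ
          = (x • (1 : Matrix (Fin (2*n)) (Fin (2*n)) K) - A)ᵀ from ?_, Matrix.det_transpose]
      rw [Matrix.transpose_sub, Matrix.transpose_smul, Matrix.transpose_one]
    rw [htr] at hdets
    have := mul_left_cancel₀ hMb0 (by rw [hdets]; ring : Mb.det * (x • (1 : Matrix (Fin (2*n)) (Fin (2*n)) K) - c • A⁻¹).det = Mb.det * (x • (1 : Matrix (Fin (2*n)) (Fin (2*n)) K) - A).det)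
    rw [this]
  -- det (x • A - c • 1)
  have hdetxAc : ∀ x : K, (x • A - c • (1:Matrix (Fin (2*n)) (Fin (2*n)) K)).det
      = (s.map (fun ν => x * ν - c)).prod := by
    intro x
    by_cases hx : x = 0
    · subst hx
      rw [show (0:K) • A - c • (1:Matrix (Fin (2*n)) (Fin (2*n)) K) = (-c) • 1 by
        rw [zero_smul, zero_sub, neg_smul]]
      rw [Matrix.det_smul, Matrix.det_one, mul_one]
      rw [show (s.map (fun ν => (0:K) * ν - c)) = s.map (fun _ => -c) from
        Multiset.map_congr rfl (fun ν _ => by ring)]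
      rw [Multiset.map_const', Multiset.prod_replicate, hcard]
      simp
    · have hx1 : x • A - c • (1:Matrix (Fin (2*n)) (Fin (2*n)) K)
          = (-x) • ((c/x) • (1:Matrix (Fin (2*n)) (Fin (2*n)) K) - A) := by
        rw [smul_sub, smul_smul]
        have h1 : (-x) * (c/x) = -c := by field_simp
        rw [h1, neg_smul c, neg_smul x]; abel
      rw [hx1, Matrix.det_smul, show Fintype.card (Fin (2*n)) = 2*n from Fintype.card_fin _,
        ← aux_eval_charpoly, hevalp]
      have h2'' : (-x) ^ (2*n) = (s.map (fun _ => -x)).prod := by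
        rw [Multiset.map_const', Multiset.prod_replicate, hcard]
      rw [h2'', ← Multiset.prod_map_mul]
      apply congrArg Multiset.prod
      apply Multiset.map_congr rfl
      intro ν _
      field_simp
      ring
  -- charpoly (c • A⁻¹) as a product over transformed roots
  have hq : (c • A⁻¹).charpoly = ((s.map (fun ν => c/ν)).map (fun a => X - C a)).prod := by
    apply Polynomial.funext
    intro x
    rw [aux_eval_charpoly, Polynomial.eval_multiset_prod, Multiset.map_map, Multiset.map_map]
    simp only [Function.comp, Polynomial.eval_sub, Polynomial.eval_X, Polynomial.eval_C]
    apply mul_right_cancel₀ hA0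
    have lhs : (x • (1:Matrix (Fin (2*n)) (Fin (2*n)) K) - c • A⁻¹).det * A.det
        = (x • A - c • (1:Matrix (Fin (2*n)) (Fin (2*n)) K)).det := by
      rw [← Matrix.det_mul, Matrix.sub_mul, Matrix.smul_mul, Matrix.one_mul,
        Matrix.smul_mul, hAA']
    rw [lhs, hdetxAc x]
    conv_rhs => rw [hdetA_eq]
    have : s.prod = (s.map (fun ν => ν)).prod := by simp
    rw [this, ← Multiset.prod_map_mul]
    apply congrArg Multiset.prod
    apply Multiset.map_congr rfl
    intro ν hν
    have hν0 : ν ≠ 0 := fun h => hzero (h ▸ hν)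
    field_simp
  -- the involution
  have part1 : s.map (fun ν => c/ν) = s := by
    have h1 : ((s.map (fun ν => c/ν)).map (fun a => X - C a)).prod.roots = s.map (fun ν => c/ν) :=
      Polynomial.roots_multiset_prod_X_sub_C _
    rw [← hq, hpq] at h1
    exact h1.symm
  refine ⟨part1, ?_⟩
  -- square root of c
  obtain ⟨lam0, hlam0⟩ := IsAlgClosed.exists_pow_nat_eq c (n := 2) (by norm_num)
  have hlam0ne : lam0 ≠ 0 := by
    intro h; apply hc0; rw [← hlam0, h]; ring
  set t := s.map (fun ν => lam0⁻¹ * ν) with ht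
  have h0t : (0:K) ∉ t := by
    intro h
    obtain ⟨ν, hν, hh⟩ := Multiset.mem_map.mp h
    rcases mul_eq_zero.mp hh with h' | h'
    · exact (inv_ne_zero hlam0ne) h'
    · exact hzero (h' ▸ hν)
  have hcard_t : Multiset.card t = 2*n := by rw [ht, Multiset.card_map, hcard]
  have htinv : t.map (fun x => x⁻¹) = t := by
    rw [ht, Multiset.map_map]
    conv_rhs => rw [← part1, Multiset.map_map]
    apply Multiset.map_congr rfl
    intro ν hν
    have hν0 : ν ≠ 0 := fun h => hzero (h ▸ hν)
    simp only [Function.comp]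
    rw [_root_.mul_inv_rev, inv_inv, div_eq_mul_inv, ← mul_assoc]
    rw [show lam0⁻¹ * c = lam0 by rw [← hlam0]; field_simp]
    ring
  have heven_t : Even (Multiset.card t) := ⟨n, by rw [hcard_t]; ring⟩
  obtain ⟨u, hu0, hcase⟩ := aux_pairup h2 t h0t htinv heven_t
  have hst : s = t.map (fun x => lam0 * x) := by
    rw [ht, Multiset.map_map]
    conv_lhs => rw [show s = s.map id from (Multiset.map_id s).symm]
    apply Multiset.map_congr rfl
    intro ν _
    simp [Function.comp, mul_inv_cancel_left₀ hlam0ne]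
  refine ⟨Units.mk0 lam0 hlam0ne, by simpa using hlam0, ?_⟩
  rcases hcase with hcase | hcase
  · -- t = u + u⁻¹ : the k = n case
    right
    have hcardu : Multiset.card u = n := by
      have := hcard_t
      rw [hcase, Multiset.card_add, Multiset.card_map] at this
      omega
    obtain ⟨g, hg⟩ := aux_enum n u hcardu
    have hgne : ∀ i, g i ≠ 0 := fun i =>
      hu0 (g i) (by rw [← hg]; exact Multiset.mem_map_of_mem g (Finset.mem_val.mpr (Finset.mem_univ i)))
    refine ⟨fun i => Units.mk0 (g i) (hgne i), ?_⟩
    simp only [Units.val_inv_eq_inv_val, Units.val_mk0]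
    rw [hst, hcase, Multiset.map_add, ← hg, Multiset.map_map, Multiset.map_map,
      Multiset.map_map]
    rfl
  · -- t = 1 ::ₘ -1 ::ₘ (u + u⁻¹) : the k = n - 1 case
    left
    have hcardu : Multiset.card u = n - 1 := by
      have h' := hcard_t
      rw [hcase] at h'
      simp only [Multiset.card_cons, Multiset.card_add, Multiset.card_map] at h'
      omega
    obtain ⟨g, hg⟩ := aux_enum (n-1) u hcardu
    have hgne : ∀ i, g i ≠ 0 := fun i =>
      hu0 (g i) (by rw [← hg]; exact Multiset.mem_map_of_mem g (Finset.mem_val.mpr (Finset.mem_univ i)))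
    refine ⟨fun i => Units.mk0 (g i) (hgne i), ?_⟩
    simp only [Units.val_inv_eq_inv_val, Units.val_mk0]
    rw [hst, hcase, Multiset.map_cons, Multiset.map_cons, Multiset.map_add, ← hg,
      Multiset.map_map, Multiset.map_map, Multiset.map_map, mul_one, mul_neg_one]
    rfl

end Main

/-- Eigenvalues of an orthogonal similitude.  Let `ℓ` be an odd prime, `M` an invertible
symmetric matrix over `𝔽_ℓ` of size `2n`, and `h ∈ CGO_{2n}(𝔽_ℓ)` with multiplier `κ`
(so `hᵀMh = κM`).  Then `ν ↦ κ/ν` is an involution of the multiset of eigenvalues of `h`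
(in `𝔽̄_ℓ`), and there are `λ` with `λ² = κ`, `k ∈ {n−1, n}` and `ξ₁, …, ξ_k` such that the
eigenvalues of `h` are `{λ, −λ, λξ₁, …, λξ_k, λξ₁⁻¹, …, λξ_k⁻¹}` (if `k = n−1`) or
`{λξ₁, …, λξ_n, λξ₁⁻¹, …, λξ_n⁻¹}` (if `k = n`). -/
theorem cgo_even_eigenvalues (ℓ : ℕ) [Fact (Nat.Prime ℓ)] (hodd : ℓ ≠ 2)
    (n : ℕ) (hn : 1 ≤ n)
    (M h : Matrix (Fin (2 * n)) (Fin (2 * n)) (ZMod ℓ))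
    (hMsymm : Mᵀ = M) (hMinv : IsUnit M.det)
    (κ : (ZMod ℓ)ˣ)
    (hsim : hᵀ * M * h = ((κ : ZMod ℓ)) • M) :
    (Multiset.map
        (fun ν => algebraMap (ZMod ℓ) (AlgebraicClosure (ZMod ℓ)) (κ : ZMod ℓ) / ν)
        (h.map (algebraMap (ZMod ℓ) (AlgebraicClosure (ZMod ℓ)))).charpoly.roots =
      (h.map (algebraMap (ZMod ℓ) (AlgebraicClosure (ZMod ℓ)))).charpoly.roots) ∧
    ∃ lam : (AlgebraicClosure (ZMod ℓ))ˣ,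
      (lam : AlgebraicClosure (ZMod ℓ)) ^ 2 =
        algebraMap (ZMod ℓ) (AlgebraicClosure (ZMod ℓ)) (κ : ZMod ℓ) ∧
      ((∃ ξ : Fin (n - 1) → (AlgebraicClosure (ZMod ℓ))ˣ,
          (h.map (algebraMap (ZMod ℓ) (AlgebraicClosure (ZMod ℓ)))).charpoly.roots =
            (lam : AlgebraicClosure (ZMod ℓ)) ::ₘ (-(lam : AlgebraicClosure (ZMod ℓ))) ::ₘ
              ((Multiset.map
                  (fun i => (lam : AlgebraicClosure (ZMod ℓ)) *
                    ((ξ i : (AlgebraicClosure (ZMod ℓ))ˣ) : AlgebraicClosure (ZMod ℓ)))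
                  (Finset.univ : Finset (Fin (n - 1))).val) +
                Multiset.map
                  (fun i => (lam : AlgebraicClosure (ZMod ℓ)) *
                    (((ξ i)⁻¹ : (AlgebraicClosure (ZMod ℓ))ˣ) : AlgebraicClosure (ZMod ℓ)))
                  (Finset.univ : Finset (Fin (n - 1))).val)) ∨
        (∃ ξ : Fin n → (AlgebraicClosure (ZMod ℓ))ˣ,
          (h.map (algebraMap (ZMod ℓ) (AlgebraicClosure (ZMod ℓ)))).charpoly.roots =
            (Multiset.map
                (fun i => (lam : AlgebraicClosure (ZMod ℓ)) *
                  ((ξ i : (AlgebraicClosure (ZMod ℓ))ˣ) : AlgebraicClosure (ZMod ℓ)))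
                (Finset.univ : Finset (Fin n)).val) +
              Multiset.map
                (fun i => (lam : AlgebraicClosure (ZMod ℓ)) *
                  (((ξ i)⁻¹ : (AlgebraicClosure (ZMod ℓ))ˣ) : AlgebraicClosure (ZMod ℓ)))
                (Finset.univ : Finset (Fin n)).val)) := by
  have hprime : Nat.Prime ℓ := Fact.out
  let f := algebraMap (ZMod ℓ) (AlgebraicClosure (ZMod ℓ))
  have hinj : Function.Injective f := f.injective
  have hM0 : M.det ≠ 0 := hMinv.ne_zero
  have hκ0 : (κ : ZMod ℓ) ≠ 0 := κ.ne_zero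
  -- det h ≠ 0
  have hdeth : h.det ≠ 0 := by
    intro hd
    have hds := congrArg Matrix.det hsim
    rw [Matrix.det_mul, Matrix.det_mul, Matrix.det_transpose, Matrix.det_smul,
      Fintype.card_fin, hd] at hds
    simp only [zero_mul, mul_zero] at hds
    exact (mul_ne_zero (pow_ne_zero _ hκ0) hM0) hds.symm
  have hdA : (h.map f).det = f h.det := by
    rw [RingHom.map_det, RingHom.mapMatrix_apply]
  have hdM : (M.map f).det = f M.det := by
    rw [RingHom.map_det, RingHom.mapMatrix_apply]
  have hA0 : (h.map f).det ≠ 0 := by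
    rw [hdA]
    exact fun hh => hdeth (hinj (by simpa using hh))
  have hMb0 : (M.map f).det ≠ 0 := by
    rw [hdM]
    exact fun hh => hM0 (hinj (by simpa using hh))
  have hc0 : f (κ : ZMod ℓ) ≠ 0 := fun hh => hκ0 (hinj (by simpa using hh))
  have h2 : (1 : AlgebraicClosure (ZMod ℓ)) ≠ -1 := by
    intro hh
    have h20 : ((2 : ℕ) : AlgebraicClosure (ZMod ℓ)) = 0 := by
      push_cast
      rw [show (2 : AlgebraicClosure (ZMod ℓ)) = 1 + 1 by norm_num]
      nth_rewrite 2 [hh]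
      ring
    have : ((2 : ℕ) : ZMod ℓ) = 0 := by
      apply hinj
      rw [map_zero, map_natCast]
      exact h20
    have hdvd : ℓ ∣ 2 := (ZMod.natCast_eq_zero_iff 2 ℓ).mp this
    exact hodd ((Nat.prime_dvd_prime_iff_eq hprime Nat.prime_two).mp hdvd)
  have hsimK : (h.map f)ᵀ * (M.map f) * (h.map f) = f (κ : ZMod ℓ) • (M.map f) := by
    rw [← Matrix.transpose_map, ← Matrix.map_mul, ← Matrix.map_mul, hsim]
    ext i j
    simp [Matrix.map_apply, Matrix.smul_apply, _root_.map_mul]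
  exact main_split n hn h2 (M.map f) (h.map f) (f (κ : ZMod ℓ)) hc0 hMb0 hA0 hsimK
end

section
/- Let p be a prime and λ₁, λ₂, λ₃ be algebraic integers, each of degree exactly 2 over ℚ and of absolute value √p under every embedding into ℂ. Assume: (i) tr(λ_i) ≠ 0 for i = 1,2,3; (ii) the multiplicative subgroup of ℚ̄ˣ generated by λ₁, λ₂, λ₃ is torsion-free. If λ₂² = λ₁λ₃, then λ₁ = λ₂ = λ₃. -/
open scoped BigOperators

open Polynomial Complex

lemma step1 (p : ℕ) (hp : p.Prime) (z : ℂ) (hint : IsIntegral ℤ z)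
    (hdeg : (minpoly ℚ z).natDegree = 2)
    (habs : ∀ w : ℂ, Polynomial.aeval w (minpoly ℚ z) = 0 → ‖w‖ = Real.sqrt p)
    (htr : (minpoly ℚ z).coeff 1 ≠ 0) :
    ∃ (t : ℤ) (Y : ℝ), t ≠ 0 ∧ Y ≠ 0 ∧ z = ((t : ℝ) + Y * Complex.I) / 2 ∧
      (t : ℝ)^2 + Y^2 = 4 * p := by
  have hzQ : IsIntegral ℚ z := hint.tower_top
  set P := minpoly ℚ z with hP
  have haev : Polynomial.aeval z P = 0 := minpoly.aeval ℚ z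
  have habsz : ‖z‖ = Real.sqrt p := habs z haev
  have hnormsq : Complex.normSq z = p := by
    have := Complex.sq_norm z
    rw [habsz] at this
    rw [← this, Real.sq_sqrt (by positivity)]
  -- coefficients
  have hmap : P = (minpoly ℤ z).map (algebraMap ℤ ℚ) :=
    minpoly.isIntegrallyClosed_eq_field_fractions' ℚ hint
  set c1 : ℚ := P.coeff 1 with hc1
  set c0 : ℚ := P.coeff 0 with hc0
  obtain ⟨T, hT⟩ : ∃ T : ℤ, (T : ℚ) = c1 := by
    refine ⟨(minpoly ℤ z).coeff 1, ?_⟩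
    rw [hc1, hmap, Polynomial.coeff_map]
    rfl
  have hmonic : P.Monic := minpoly.monic hzQ
  -- expansion: z^2 + c1 z + c0 = 0
  have hexp : z^2 + (c1 : ℂ) * z + (c0 : ℂ) = 0 := by
    have h := haev
    rw [Polynomial.aeval_eq_sum_range, hdeg] at h
    simp [Finset.sum_range_succ, Rat.smul_def] at h
    have hlead : P.coeff 2 = 1 := by
      have := hmonic.leadingCoeff
      rwa [Polynomial.leadingCoeff, hdeg] at this
    rw [hlead] at h
    push_cast at h ⊢
    linear_combination h
  -- conjugate is also a root
  have hconj : Polynomial.aeval ((starRingEnd ℂ) z) P = 0 := by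
    have f : ℂ →ₐ[ℚ] ℂ := (Complex.conjAe.toAlgHom.restrictScalars ℚ)
    have := Polynomial.aeval_algHom_apply ((Complex.conjAe.toAlgHom.restrictScalars ℚ)) z P
    rw [haev, map_zero] at this
    exact this
  -- z is not real
  have him : z.im ≠ 0 := by
    intro him0
    have hzre : z = ((z.re : ℝ) : ℂ) := by
      exact (Complex.conj_eq_iff_re.mp (Complex.conj_eq_iff_im.mpr him0)).symm
    have hsq : (z.re : ℝ)^2 = p := by
      have := hnormsq
      rw [Complex.normSq_apply, him0] at this
      nlinarith [this]
    have hc1ne : (c1 : ℝ) ≠ 0 := by exact_mod_cast htr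
    -- z.re = rational
    have hre : (z.re : ℝ) = ((-(p + c0)/c1 : ℚ) : ℝ) := by
      have h2 : (z.re:ℂ)^2 + (c1:ℂ) * (z.re:ℂ) + (c0:ℂ) = 0 := by rw [← hzre]; exact hexp
      have h3 : (z.re:ℝ)^2 + (c1:ℝ) * z.re + (c0:ℝ) = 0 := by exact_mod_cast h2
      rw [hsq] at h3
      push_cast
      field_simp
      linarith
    have hzrat : z = (((-(p + c0)/c1 : ℚ)) : ℂ) := by
      rw [hzre, hre]; norm_cast
    have : (minpoly ℚ z).natDegree = 1 := by
      rw [show z = algebraMap ℚ ℂ ((-(p + c0)/c1 : ℚ)) from hzrat, minpoly.eq_X_sub_C]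
      exact Polynomial.natDegree_X_sub_C _
    rw [← hP] at this
    omega
  -- trace relation
  have hzne : z ≠ (starRingEnd ℂ) z := by
    intro h
    exact him ((Complex.conj_eq_iff_im.mp h.symm))
  have hexpc : ((starRingEnd ℂ) z)^2 + (c1 : ℂ) * ((starRingEnd ℂ) z) + (c0 : ℂ) = 0 := by
    have := congrArg (starRingEnd ℂ) hexp
    simpa [map_add, map_mul, map_pow, Complex.conj_ofReal] using this
  have hfac : (z - (starRingEnd ℂ) z) * (z + (starRingEnd ℂ) z + (c1:ℂ)) = 0 := by
    linear_combination hexp - hexpc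
  have hsum : z + (starRingEnd ℂ) z = -(c1 : ℂ) := by
    rcases mul_eq_zero.mp hfac with h | h
    · exact absurd (sub_eq_zero.mp h) hzne
    · linear_combination h
  have hre2 : 2 * z.re = -(T : ℝ) := by
    have h1 := Complex.add_conj z
    rw [hsum] at h1
    have h2 : ((2 * z.re : ℝ) : ℂ) = ((-(T:ℚ) : ℚ) : ℂ) := by
      rw [← h1, hT]; push_cast; ring
    have h3 : (2 * z.re : ℝ) = ((-(T:ℚ) : ℚ) : ℝ) := by exact_mod_cast h2
    rw [h3]; push_cast; ring
  refine ⟨-T, 2 * z.im, ?_, ?_, ?_, ?_⟩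
  · intro h
    apply htr
    rw [← hT]
    norm_cast
    omega
  · simpa using him
  · apply Complex.ext <;> simp [Complex.div_re, Complex.div_im] <;> push_cast <;>
      rw [← hre2] <;> ring_nf <;> simp [Complex.normSq_apply] <;> ring
  · have h4 : z.re * z.re + z.im * z.im = p := by rw [← Complex.normSq_apply, hnormsq]
    have h5 : (2*z.re)^2 = ((-T : ℤ) : ℝ)^2 := by rw [hre2]; push_cast; ring
    push_cast at h5 ⊢
    nlinarith [h5, h4]

lemma p2case (t0 t1 t2 G01 : ℤ)
    (hb0l : -2 ≤ t0) (hb0r : t0 ≤ 2) (hb1l : -2 ≤ t1) (hb1r : t1 ≤ 2)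
    (hb2l : -2 ≤ t2) (hb2r : t2 ≤ 2) (hbGl : -7 ≤ G01) (hbGr : G01 ≤ 7)
    (ht0 : t0 ≠ 0) (ht1 : t1 ≠ 0) (ht2 : t2 ≠ 0)
    (hd : G01^2 = (8 - t0^2)*(8 - t1^2))
    (hc : 2*t1*G01 = t0*(t0*t2 - t1^2 + (8 - t1^2)) + t2*(8 - t0^2)) :
    (4:ℤ) ∣ t0*t1 + G01 := by
  interval_cases t0 <;> interval_cases t1 <;> interval_cases t2 <;>
    interval_cases G01 <;> omega

set_option maxHeartbeats 2000000 in
/-- Let `p` be a prime and `λ₀, λ₁, λ₂` algebraic integers of degree exactly `2` over `ℚ`,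
all of whose conjugates (i.e. all roots of their minimal polynomials) have absolute value
`√p`.  Assume their traces are nonzero (equivalently, the degree-one coefficients of their
minimal polynomials are nonzero) and that the multiplicative subgroup of `ℂˣ` they generate
is torsion-free.  If `λ₁² = λ₀λ₂` then `λ₀ = λ₁ = λ₂`. -/
theorem weil_numbers_square_relation (p : ℕ) (hp : p.Prime)
    (lam : Fin 3 → ℂ)
    (hint : ∀ i, IsIntegral ℤ (lam i))
    (hdeg : ∀ i, (minpoly ℚ (lam i)).natDegree = 2)
    (habs : ∀ i, ∀ z : ℂ, Polynomial.aeval z (minpoly ℚ (lam i)) = 0 →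
      ‖z‖ = Real.sqrt p)
    (htr : ∀ i, (minpoly ℚ (lam i)).coeff 1 ≠ 0)
    (htf : ∀ z : ℂ, (∃ m : Fin 3 → ℤ, z = ∏ i, lam i ^ m i) →
      ∀ k : ℕ, 0 < k → z ^ k = 1 → z = 1)
    (hrel : lam 1 ^ 2 = lam 0 * lam 2) :
    lam 0 = lam 1 ∧ lam 1 = lam 2 := by
  obtain ⟨t0, Y0, ht0, hY0, hz0, hn0⟩ := step1 p hp (lam 0) (hint 0) (hdeg 0) (habs 0) (htr 0)
  obtain ⟨t1, Y1, ht1, hY1, hz1, hn1⟩ := step1 p hp (lam 1) (hint 1) (hdeg 1) (habs 1) (htr 1)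
  obtain ⟨t2, Y2, ht2, hY2, hz2, hn2⟩ := step1 p hp (lam 2) (hint 2) (hdeg 2) (habs 2) (htr 2)
  have hp0 : (0:ℤ) < (p:ℤ) := by exact_mod_cast hp.pos
  -- complex relation in coordinates
  have key : (((t1:ℝ):ℂ) + (Y1:ℂ) * Complex.I)^2
      = (((t0:ℝ):ℂ) + (Y0:ℂ) * Complex.I) * (((t2:ℝ):ℂ) + (Y2:ℂ) * Complex.I) := by
    have h := hrel
    rw [hz0, hz1, hz2] at h
    field_simp at h
    push_cast at h ⊢
    linear_combination h
  have hRe : (t1:ℝ)^2 - Y1^2 = (t0:ℝ)*(t2:ℝ) - Y0*Y2 := by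
    have h := congrArg Complex.re key
    simp [Complex.mul_re, Complex.mul_im, pow_two] at h
    linarith [h]
  have hIm : 2*(t1:ℝ)*Y1 = (t0:ℝ)*Y2 + (t2:ℝ)*Y0 := by
    have h := congrArg Complex.im key
    simp [Complex.mul_re, Complex.mul_im, pow_two] at h
    linarith [h]
  -- integer layer
  obtain ⟨n0, hn0d⟩ : ∃ n : ℤ, n = 4*(p:ℤ) - t0^2 := ⟨_, rfl⟩
  obtain ⟨n1, hn1d⟩ : ∃ n : ℤ, n = 4*(p:ℤ) - t1^2 := ⟨_, rfl⟩
  obtain ⟨n2, hn2d⟩ : ∃ n : ℤ, n = 4*(p:ℤ) - t2^2 := ⟨_, rfl⟩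
  have hn0r : ((n0:ℤ):ℝ) = Y0^2 := by rw [hn0d]; push_cast; linarith [hn0]
  have hn1r : ((n1:ℤ):ℝ) = Y1^2 := by rw [hn1d]; push_cast; linarith [hn1]
  have hn2r : ((n2:ℤ):ℝ) = Y2^2 := by rw [hn2d]; push_cast; linarith [hn2]
  obtain ⟨G02, hG02d⟩ : ∃ g : ℤ, g = t0*t2 - t1^2 + n1 := ⟨_, rfl⟩
  have hG02r : ((G02:ℤ):ℝ) = Y0*Y2 := by
    rw [hG02d]; push_cast; linear_combination hn1r - hRe
  have he : G02^2 = n0*n2 := by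
    have : ((G02^2 : ℤ):ℝ) = ((n0*n2 : ℤ):ℝ) := by
      push_cast
      rw [hG02r]
      linear_combination (-(Y2^2)) * hn0r - (n0:ℝ) * hn2r
    exact_mod_cast this
  obtain ⟨A, hAd⟩ : ∃ a : ℤ, a = t0*G02 + t2*n0 := ⟨_, rfl⟩
  have hAr : ((A:ℤ):ℝ) = 2*(t1:ℝ)*(Y0*Y1) := by
    rw [hAd]; push_cast
    rw [hG02r]
    linear_combination (-Y0) * hIm + (t2:ℝ) * hn0r
  have hA2 : A^2 = (2*t1)^2 * (n0*n1) := by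
    have : ((A^2:ℤ):ℝ) = (((2*t1)^2 * (n0*n1) : ℤ):ℝ) := by
      push_cast
      rw [hAr]
      linear_combination (-(4*(t1:ℝ)^2*Y1^2)) * hn0r - (4*(t1:ℝ)^2*(n0:ℝ)) * hn1r
    exact_mod_cast this
  have hdvdA : (2*t1) ∣ A := by
    have h2 : (2*t1)^2 ∣ A^2 := ⟨n0*n1, hA2⟩
    exact (Int.pow_dvd_pow_iff (two_ne_zero)).mp h2
  obtain ⟨G01, hG01d⟩ := hdvdA
  have hG01r : ((G01:ℤ):ℝ) = Y0*Y1 := by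
    have : ((2*t1:ℤ):ℝ) * (G01:ℝ) = ((2*t1:ℤ):ℝ) * (Y0*Y1) := by
      push_cast
      have := hAr
      rw [hG01d] at this
      push_cast at this
      linarith [this]
    have h2t1 : ((2*t1:ℤ):ℝ) ≠ 0 := by
      push_cast
      intro h
      apply ht1
      have : (t1:ℝ) = 0 := by linarith
      exact_mod_cast this
    exact mul_left_cancel₀ h2t1 this
  have hd : G01^2 = n0*n1 := by
    have : ((G01^2 : ℤ):ℝ) = ((n0*n1 : ℤ):ℝ) := by
      push_cast
      rw [hG01r]
      linear_combination (-(Y1^2)) * hn0r - (n0:ℝ) * hn1r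
    exact_mod_cast this
  have hc : 2*t1*G01 = t0*G02 + t2*n0 := by rw [← hAd, hG01d]
  obtain ⟨M, hMd⟩ : ∃ m : ℤ, m = t0*t1 + G01 := ⟨_, rfl⟩
  -- parity: 2 ∣ M
  have h4dvd : (4:ℤ) ∣ M*(M - 2*t0*t1) := by
    refine ⟨4*(p:ℤ)^2 - (p:ℤ)*t0^2 - (p:ℤ)*t1^2, ?_⟩
    rw [hMd, hn0d, hn1d] at *
    linear_combination hd
  have heven : (2:ℤ) ∣ M := by
    rcases Int.even_or_odd M with h | h
    · exact h.two_dvd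
    · exfalso
      have hodd : Odd (M*(M - 2*t0*t1)) := by
        refine h.mul ?_
        rcases h with ⟨k, hk⟩
        exact ⟨k - t0*t1, by rw [hk]; ring⟩
      obtain ⟨c, hc4⟩ := h4dvd
      rcases hodd with ⟨j, hj⟩
      rw [hc4] at hj
      omega
  -- p ∣ M (odd case), or 4 ∣ M when p = 2
  have hkey : (2*(p:ℤ)) ∣ M := by
    by_cases hp2 : p = 2
    · -- p = 2 : need 4 ∣ M
      subst hp2
      have hn0pos : 0 < n0 := by
        have : (0:ℝ) < (n0:ℝ) := by rw [hn0r]; positivity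
        exact_mod_cast this
      have hn1pos : 0 < n1 := by
        have : (0:ℝ) < (n1:ℝ) := by rw [hn1r]; positivity
        exact_mod_cast this
      have hn2pos : 0 < n2 := by
        have : (0:ℝ) < (n2:ℝ) := by rw [hn2r]; positivity
        exact_mod_cast this
      norm_num at hn0d hn1d hn2d
      have hsq0 : (1:ℤ) ≤ t0^2 := by rcases lt_or_gt_of_ne ht0 with h|h <;> nlinarith
      have hsq1 : (1:ℤ) ≤ t1^2 := by rcases lt_or_gt_of_ne ht1 with h|h <;> nlinarith
      have hsq2 : (1:ℤ) ≤ t2^2 := by rcases lt_or_gt_of_ne ht2 with h|h <;> nlinarith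
      have hb0 : -2 ≤ t0 ∧ t0 ≤ 2 := by
        constructor <;> nlinarith [hn0pos, sq_nonneg (t0+3), sq_nonneg (t0-3)]
      have hb1 : -2 ≤ t1 ∧ t1 ≤ 2 := by
        constructor <;> nlinarith [hn1pos, sq_nonneg (t1+3), sq_nonneg (t1-3)]
      have hb2 : -2 ≤ t2 ∧ t2 ≤ 2 := by
        constructor <;> nlinarith [hn2pos, sq_nonneg (t2+3), sq_nonneg (t2-3)]
      have hbG : -7 ≤ G01 ∧ G01 ≤ 7 := by
        have h1 : n0 ≤ 7 := by linarith
        have h2 : n1 ≤ 7 := by linarith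
        constructor <;>
          nlinarith [hd, hn0pos, hn1pos, sq_nonneg (G01+8), sq_nonneg (G01-8), h1, h2]
      rw [hMd]
      show (4:ℤ) ∣ t0*t1 + G01
      apply p2case t0 t1 t2 G01 hb0.1 hb0.2 hb1.1 hb1.2 hb2.1 hb2.2 hbG.1 hbG.2 ht0 ht1 ht2
      · rw [← hn0d, ← hn1d]; exact hd
      · rw [← hn1d, ← hn0d, ← hG02d]; exact hc
    · -- p odd
      have hpodd : Odd p := hp.odd_of_ne_two hp2
      have hpint : Prime (p:ℤ) := Nat.prime_iff_prime_int.mp hp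
      have hpM : (p:ℤ) ∣ M := by
        by_cases hdvd0 : (p:ℤ) ∣ t0
        · have hpn0 : (p:ℤ) ∣ n0 := by
            rw [hn0d]
            exact dvd_sub (Dvd.dvd.mul_left dvd_rfl 4) (dvd_pow hdvd0 two_ne_zero)
          have hpG : (p:ℤ) ∣ G01 := by
            apply hpint.dvd_of_dvd_pow (n := 2)
            rw [hd]; exact hpn0.mul_right n1
          rw [hMd]
          exact dvd_add ((hdvd0.mul_right t1)) hpG
        · by_cases hdvd1 : (p:ℤ) ∣ t1
          · have hpn1 : (p:ℤ) ∣ n1 := by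
              rw [hn1d]
              exact dvd_sub (Dvd.dvd.mul_left dvd_rfl 4) (dvd_pow hdvd1 two_ne_zero)
            have hpG : (p:ℤ) ∣ G01 := by
              apply hpint.dvd_of_dvd_pow (n := 2)
              rw [hd]; exact hpn1.mul_left n0
            rw [hMd]
            exact dvd_add ((hdvd1.mul_left t0)) hpG
          · -- main ZMod argument
            haveI : Fact p.Prime := ⟨hp⟩
            have ht0z : (t0 : ZMod p) ≠ 0 := by
              rw [Ne, ZMod.intCast_zmod_eq_zero_iff_dvd]
              exact_mod_cast hdvd0
            have ht1z : (t1 : ZMod p) ≠ 0 := by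
              rw [Ne, ZMod.intCast_zmod_eq_zero_iff_dvd]
              exact_mod_cast hdvd1
            have h2z : (2 : ZMod p) ≠ 0 := by
              intro h
              have h2 : ((2:ℕ) : ZMod p) = 0 := by exact_mod_cast h
              have := (ZMod.natCast_eq_zero_iff 2 p).mp h2
              exact hp2 ((Nat.prime_dvd_prime_iff_eq hp Nat.prime_two).mp this)
            have hpz : ((p:ℕ) : ZMod p) = 0 := ZMod.natCast_self p
            -- cast equations to ZMod p
            have e1 : (G02 : ZMod p) = t0*t2 - 2*t1^2 := by
              have := congrArg (fun x : ℤ => (x : ZMod p)) hG02d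
              push_cast at this
              rw [this, congrArg (fun x : ℤ => (x : ZMod p)) hn1d]
              push_cast
              rw [hpz]; ring
            have en0 : ((n0:ℤ) : ZMod p) = -t0^2 := by
              rw [congrArg (fun x : ℤ => (x : ZMod p)) hn0d]; push_cast; rw [hpz]; ring
            have en2 : ((n2:ℤ) : ZMod p) = -t2^2 := by
              rw [congrArg (fun x : ℤ => (x : ZMod p)) hn2d]; push_cast; rw [hpz]; ring
            have e2 : ((G02 : ZMod p))^2 = (t0*t2)^2 := by
              have := congrArg (fun x : ℤ => (x : ZMod p)) he
              push_cast at this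
              rw [this, en0, en2]; ring
            have hfac : ((G02 : ZMod p) - t0*t2) * ((G02 : ZMod p) + t0*t2) = 0 := by
              linear_combination e2
            have hG02z : (G02 : ZMod p) = -(t0*t2) := by
              rcases mul_eq_zero.mp hfac with h | h
              · exfalso
                have h1 : (G02 : ZMod p) = t0*t2 := by linear_combination h
                rw [e1] at h1
                have h2 : (2 : ZMod p)*(t1:ZMod p)^2 = 0 := by linear_combination -h1
                rcases mul_eq_zero.mp h2 with h3 | h3
                · exact h2z h3
                · exact ht1z (pow_eq_zero_iff two_ne_zero |>.mp h3)
              · linear_combination h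
            have ht0t2 : (t0 : ZMod p) * t2 = (t1:ZMod p)^2 := by
              rw [hG02z] at e1
              have h2 : (2:ZMod p) * ((t1:ZMod p)^2 - (t0:ZMod p)*t2) = 0 := by
                linear_combination e1
              rcases mul_eq_zero.mp h2 with h3 | h3
              · exact absurd h3 h2z
              · linear_combination -h3
            have ecast := congrArg (fun x : ℤ => (x : ZMod p)) hc
            push_cast at ecast
            rw [hG02z, en0] at ecast
            have ec2 : ((2:ZMod p)*(t1:ZMod p)) * ((G01:ZMod p) + (t0:ZMod p)*(t1:ZMod p)) = 0 := by
              linear_combination ecast - (2:ZMod p)*(t0:ZMod p)*ht0t2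
            have hG01z : (G01 : ZMod p) = -((t0:ZMod p)*(t1:ZMod p)) := by
              have h2t1 : (2:ZMod p)*(t1:ZMod p) ≠ 0 := mul_ne_zero h2z ht1z
              rcases mul_eq_zero.mp ec2 with h | h
              · exact absurd h h2t1
              · linear_combination h
            have : ((M:ℤ) : ZMod p) = 0 := by
              rw [congrArg (fun x : ℤ => (x : ZMod p)) hMd]
              push_cast
              rw [hG01z]; ring
            exact_mod_cast (ZMod.intCast_zmod_eq_zero_iff_dvd M p).mp this
      -- combine 2 ∣ M, p ∣ M
      obtain ⟨k, hk⟩ := heven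
      have : (p:ℤ) ∣ 2*k := by rw [← hk]; exact hpM
      rcases hpint.dvd_mul.mp this with h | h
      · exfalso
        have := Int.le_of_dvd (by norm_num) h
        have h3 : (3:ℤ) ≤ p := by
          have := hp.two_le
          omega
        omega
      · obtain ⟨j, hj⟩ := h
        exact ⟨j, by rw [hk, hj]; ring⟩
  -- bound on M
  obtain ⟨m, hm⟩ := hkey
  have hMr : ((M:ℤ):ℝ) = (t0:ℝ)*(t1:ℝ) + Y0*Y1 := by
    rw [hMd]; push_cast; rw [hG01r]
  have hMsq : ((M:ℤ):ℝ)^2 ≤ (4*(p:ℝ))^2 := by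
    rw [hMr]
    nlinarith [sq_nonneg ((t0:ℝ)*Y1 - (t1:ℝ)*Y0), hn0, hn1, sq_nonneg ((t0:ℝ)*Y1 + (t1:ℝ)*Y0)]
  have hMb : M^2 ≤ (4*(p:ℤ))^2 := by exact_mod_cast hMsq
  have hmb : -2 ≤ m ∧ m ≤ 2 := by
    constructor <;> nlinarith [hm, hMb, hp0, sq_nonneg (M - 4*(p:ℤ)), sq_nonneg (M + 4*(p:ℤ))]
  -- the unit z
  have hpR : (0:ℝ) < p := by exact_mod_cast hp.pos
  have habs1 : ‖lam 1‖ = Real.sqrt p := habs 1 _ (minpoly.aeval ℚ _)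
  have habs0 : ‖lam 0‖ = Real.sqrt p := habs 0 _ (minpoly.aeval ℚ _)
  have hns0 : Complex.normSq (lam 0) = p := by
    rw [← Complex.sq_norm, habs0, Real.sq_sqrt hpR.le]
  have hns1 : Complex.normSq (lam 1) = p := by
    rw [← Complex.sq_norm, habs1, Real.sq_sqrt hpR.le]
  have hlam1ne : lam 1 ≠ 0 := by
    intro h
    rw [h, map_zero] at hns1
    exact absurd hns1.symm (by positivity)
  set z : ℂ := lam 0 / lam 1 with hzdef
  have hprod : z * (starRingEnd ℂ) z = 1 := by
    rw [Complex.mul_conj, hzdef, map_div₀, hns0, hns1]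
    rw [div_self (by positivity)]
    norm_num
  have hsum : z + (starRingEnd ℂ) z = (m:ℝ) := by
    rw [Complex.add_conj]
    norm_cast
    -- goal : 2 * z.re = m in ℝ
    have hre : z.re = (lam 0).re * (lam 1).re / Complex.normSq (lam 1)
        + (lam 0).im * (lam 1).im / Complex.normSq (lam 1) := Complex.div_re _ _
    have hre0 : (lam 0).re = (t0:ℝ)/2 := by rw [hz0]; simp
    have him0 : (lam 0).im = Y0/2 := by rw [hz0]; simp
    have hre1 : (lam 1).re = (t1:ℝ)/2 := by rw [hz1]; simp
    have him1 : (lam 1).im = Y1/2 := by rw [hz1]; simp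
    have hM2pm : ((M:ℤ):ℝ) = 2*(p:ℝ)*(m:ℝ) := by rw [hm]; push_cast; ring
    rw [hre, hre0, him0, hre1, him1, hns1]
    rw [hMr] at hM2pm
    field_simp
    linarith [hM2pm]
  have hquad : z^2 - (m:ℝ)*z + 1 = 0 := by
    linear_combination z * hsum - hprod
  have hz12 : z^12 = 1 := by
    obtain ⟨hml, hmr⟩ := hmb
    interval_cases m
    · -- m = -2 : (z+1)^2 = 0
      have h1 : (z+1)^2 = 0 := by push_cast at hquad; linear_combination hquad
      have h2 : z = -1 := by
        have := pow_eq_zero_iff (n := 2) (by norm_num) |>.mp h1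
        linear_combination this
      rw [h2]; norm_num
    · have h3 : z^3 = 1 := by push_cast at hquad; linear_combination (z - 1) * hquad
      calc z^12 = (z^3)^4 := by ring
      _ = 1 := by rw [h3]; norm_num
    · have h4 : z^4 = 1 := by push_cast at hquad; linear_combination (z^2 - 1) * hquad
      calc z^12 = (z^4)^3 := by ring
      _ = 1 := by rw [h4]; norm_num
    · have h6 : z^6 = 1 := by
        push_cast at hquad
        linear_combination ((z+1)*(z^3-1)) * hquad
      calc z^12 = (z^6)^2 := by ring
      _ = 1 := by rw [h6]; norm_num
    · have h1 : (z-1)^2 = 0 := by push_cast at hquad; linear_combination hquad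
      have h2 : z = 1 := by
        have := pow_eq_zero_iff (n := 2) (by norm_num) |>.mp h1
        linear_combination this
      rw [h2]; norm_num
  have hzmem : ∃ mm : Fin 3 → ℤ, z = ∏ i, lam i ^ mm i := by
    refine ⟨![1, -1, 0], ?_⟩
    rw [Fin.prod_univ_three]
    simp [hzdef]
    rw [div_eq_mul_inv]
  have hz1' : z = 1 := htf z hzmem 12 (by norm_num) hz12
  have h01 : lam 0 = lam 1 := by
    rw [hzdef] at hz1'
    exact (div_eq_one_iff_eq hlam1ne).mp hz1'
  refine ⟨h01, ?_⟩
  have : lam 1 * lam 1 = lam 1 * lam 2 := by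
    rw [← pow_two, hrel, h01]
  exact mul_left_cancel₀ hlam1ne this
end

section
/- Let N ≥ 3 be an integer and let μ₁,…,μ_{2g} be algebraic integers each congruent to 1 modulo N (i.e., (μ_i − 1)/N is an algebraic integer for all i). Then the multiplicative subgroup of ℚ̄ˣ generated by μ₁,…,μ_{2g} contains no nontrivial root of unity. -/
open scoped BigOperators

open Polynomial

/-- The complex absolute value, bundled (removed from Mathlib). -/
noncomputable def Complex.abs : AbsoluteValue ℂ ℝ where
  toFun x := ‖x‖
  map_mul' := norm_mul
  nonneg' := norm_nonneg
  eq_zero' _ := norm_eq_zero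
  add_le' := norm_add_le

lemma Complex.abs_natCast (n : ℕ) : Complex.abs (n : ℂ) = n := Complex.norm_natCast n

lemma Complex.abs_intCast (n : ℤ) : Complex.abs (n : ℂ) = |(n : ℝ)| := Complex.norm_intCast n

private lemma cong_mul {N : ℕ} (hN : (N:ℂ) ≠ 0) {x y : ℂ} (hx : IsIntegral ℤ x)
    (hxc : IsIntegral ℤ ((x - 1) / N)) (hyc : IsIntegral ℤ ((y - 1) / N)) :
    IsIntegral ℤ ((x * y - 1) / N) := by
  have h : (x * y - 1) / N = x * ((y - 1) / N) + (x - 1) / N := by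
    field_simp; ring
  rw [h]
  exact (hx.mul hyc).add hxc

private lemma cong_pow {N : ℕ} (hN : (N:ℂ) ≠ 0) {x : ℂ} (hx : IsIntegral ℤ x)
    (hxc : IsIntegral ℤ ((x - 1) / N)) (m : ℕ) :
    IsIntegral ℤ ((x ^ m - 1) / N) := by
  induction m with
  | zero => simpa using isIntegral_zero
  | succ m ih =>
    have := cong_mul hN hx hxc ih
    rw [← pow_succ'] at this
    exact this

private lemma cong_prod {N : ℕ} (hN : (N:ℂ) ≠ 0) {ι : Type*} (s : Finset ι) (f : ι → ℂ)
    (hx : ∀ i ∈ s, IsIntegral ℤ (f i)) (hc : ∀ i ∈ s, IsIntegral ℤ ((f i - 1) / N)) :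
    IsIntegral ℤ (∏ i ∈ s, f i) ∧ IsIntegral ℤ ((∏ i ∈ s, f i - 1) / N) := by
  induction s using Finset.cons_induction with
  | empty => simpa using ⟨isIntegral_one, isIntegral_zero⟩
  | cons a s ha ih =>
    rw [Finset.prod_cons]
    obtain ⟨ih1, ih2⟩ := ih (fun i hi => hx i (Finset.mem_cons_of_mem hi))
      (fun i hi => hc i (Finset.mem_cons_of_mem hi))
    exact ⟨(hx a (Finset.mem_cons_self a s)).mul ih1,
      cong_mul hN (hx a (Finset.mem_cons_self a s)) (hc a (Finset.mem_cons_self a s)) ih2⟩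

private lemma abs_prod_le (c : ℝ) (hc : 0 ≤ c) (s : Multiset ℂ)
    (h : ∀ x ∈ s, Complex.abs x ≤ c) :
    (s.map Complex.abs).prod ≤ c ^ Multiset.card s := by
  induction s using Multiset.induction with
  | empty => simp
  | cons a s ih =>
    simp only [Multiset.map_cons, Multiset.prod_cons, Multiset.card_cons, pow_succ']
    have h1 : Complex.abs a ≤ c := h a (Multiset.mem_cons_self a s)
    have h2 := ih (fun x hx => h x (Multiset.mem_cons_of_mem hx))
    have hnn : (0:ℝ) ≤ (s.map Complex.abs).prod := by
      apply Multiset.prod_nonneg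
      intro x hx
      obtain ⟨y, _, rfl⟩ := Multiset.mem_map.mp hx
      exact AbsoluteValue.nonneg _ _
    calc Complex.abs a * (s.map Complex.abs).prod ≤ c * (s.map Complex.abs).prod :=
          mul_le_mul_of_nonneg_right h1 hnn
      _ ≤ c * c ^ Multiset.card s := mul_le_mul_of_nonneg_left h2 hc

set_option maxHeartbeats 1000000 in
/-- A root of unity `z` with `(z-1)/N` an algebraic integer, `N ≥ 3`, is `1`. -/
private lemma root_of_unity_cong_one {N : ℕ} (hN : 3 ≤ N) {z : ℂ} {k : ℕ} (hk : 0 < k)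
    (hzk : z ^ k = 1) (hcong : IsIntegral ℤ ((z - 1) / N)) : z = 1 := by
  by_contra hne
  have hN0 : (N:ℂ) ≠ 0 := by
    simp only [ne_eq, Nat.cast_eq_zero]; omega
  set α : ℂ := (z - 1) / N with hα
  have hα0 : α ≠ 0 := div_ne_zero (sub_ne_zero.mpr hne) hN0
  have hz_eq : (N:ℂ) * α + 1 = z := by
    rw [hα, mul_comm, div_mul_cancel₀ _ hN0]; ring
  -- α is a root of f = (N X + 1)^k - 1
  set f : ℤ[X] := (C (N:ℤ) * X + 1) ^ k - 1 with hf
  have hfα : Polynomial.aeval α f = 0 := by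
    have h1 : Polynomial.aeval α f = ((N:ℂ) * α + 1) ^ k - 1 := by
      simp [hf]
    rw [h1, hz_eq, hzk, sub_self]
  have hdvd : minpoly ℤ α ∣ f := minpoly.isIntegrallyClosed_dvd hcong hfα
  set p : ℤ[X] := minpoly ℤ α with hp
  set q : ℂ[X] := p.map (algebraMap ℤ ℂ) with hq
  have hpmonic : p.Monic := minpoly.monic hcong
  have hqmonic : q.Monic := hpmonic.map _
  have hqdeg : q.natDegree = p.natDegree := hpmonic.natDegree_map _
  have hdpos : 0 < p.natDegree := minpoly.natDegree_pos hcong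
  have hsplits : q.Splits := IsAlgClosed.splits q
  have hcard : Multiset.card q.roots = q.natDegree :=
    (splits_iff_card_roots.mp hsplits)
  -- each root β of q satisfies |β| ≤ 2/3
  have hroot : ∀ β ∈ q.roots, Complex.abs β ≤ 2 / 3 := by
    intro β hβ
    have hβ0 : q.eval β = 0 := by
      exact (mem_roots (hqmonic.ne_zero)).mp hβ
    have hfβ : ((N:ℂ) * β + 1) ^ k = 1 := by
      have hqf : q ∣ f.map (algebraMap ℤ ℂ) := Polynomial.map_dvd _ hdvd
      have : (f.map (algebraMap ℤ ℂ)).eval β = 0 := by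
        obtain ⟨r, hr⟩ := hqf
        rw [hr, eval_mul, hβ0, zero_mul]
      simp only [hf, Polynomial.map_sub, Polynomial.map_pow, Polynomial.map_add,
        Polynomial.map_mul, map_C, map_X, Polynomial.map_one, eval_sub, eval_pow,
        eval_add, eval_mul, eval_C, eval_X, eval_one, sub_eq_zero] at this
      rw [show (algebraMap ℤ ℂ) (N:ℤ) = (N:ℂ) by simp] at this
      exact this
    have habs : Complex.abs ((N:ℂ) * β + 1) = 1 := by
      have h1 : (Complex.abs ((N:ℂ) * β + 1)) ^ k = 1 := by
        rw [← map_pow, hfβ, map_one]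
      have h2 := pow_eq_one_iff_cases.mp h1
      rcases h2 with h | h | h
      · omega
      · exact h
      · exfalso; nlinarith [AbsoluteValue.nonneg Complex.abs ((N:ℂ) * β + 1)]
    have hNβ : Complex.abs ((N:ℂ) * β) ≤ 2 := by
      calc Complex.abs ((N:ℂ) * β) = Complex.abs (((N:ℂ) * β + 1) + (-1)) := by ring_nf
        _ ≤ Complex.abs ((N:ℂ) * β + 1) + Complex.abs (-1) := AbsoluteValue.add_le _ _ _
        _ = 2 := by rw [habs]; simp; norm_num
    have hNr : (3:ℝ) ≤ (N:ℝ) := by exact_mod_cast hN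
    rw [map_mul, Complex.abs_natCast] at hNβ
    rw [show (2:ℝ)/3 = 2/3 by norm_num]
    have hβle : Complex.abs β ≤ 2 / N := by
      rw [le_div_iff₀ (by linarith : (0:ℝ) < N), mul_comm]
      exact hNβ
    calc Complex.abs β ≤ 2 / N := hβle
      _ ≤ 2 / 3 := by
        apply div_le_div_of_nonneg_left (by norm_num) (by norm_num) hNr
  -- constant coefficient
  have hαQ : IsIntegral ℚ α := hcong.tower_top
  have heqQ : minpoly ℚ α = p.map (algebraMap ℤ ℚ) :=
    minpoly.isIntegrallyClosed_eq_field_fractions' ℚ hcong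
  have hc0 : p.coeff 0 ≠ 0 := by
    intro h
    apply minpoly.coeff_zero_ne_zero hαQ hα0
    rw [heqQ, coeff_map, h, map_zero]
  have hcoeff : q.coeff 0 = (-1) ^ q.natDegree * q.roots.prod :=
    hsplits.coeff_zero_eq_prod_roots_of_monic hqmonic
  have habs_coeff : Complex.abs (q.coeff 0) = (q.roots.map Complex.abs).prod := by
    rw [hcoeff, map_mul, map_pow, AbsoluteValue.map_neg, map_one, one_pow, one_mul]
    exact (Complex.abs.toMonoidHom.map_multiset_prod q.roots).symm ▸ rfl
  have hupper : (q.roots.map Complex.abs).prod ≤ (2/3) ^ Multiset.card q.roots :=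
    abs_prod_le _ (by norm_num) _ hroot
  have hlower : (1:ℝ) ≤ Complex.abs (q.coeff 0) := by
    have : q.coeff 0 = ((p.coeff 0 : ℤ) : ℂ) := by
      simp [hq, coeff_map]
    rw [this, Complex.abs_intCast]
    exact_mod_cast Int.one_le_abs hc0
  have hsmall : ((2:ℝ)/3) ^ Multiset.card q.roots < 1 := by
    apply pow_lt_one₀ (by norm_num) (by norm_num)
    rw [hcard, hqdeg]; omega
  rw [habs_coeff] at hlower
  linarith

/-- Let `N ≥ 3` and let `μ₁, …, μ_{2g}` be algebraic integers with each `(μᵢ − 1)/N` an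
algebraic integer (i.e. `μᵢ ≡ 1 mod N`).  Then the multiplicative subgroup of `ℂˣ`
generated by the `μᵢ` contains no nontrivial root of unity. -/
theorem no_nontrivial_root_of_unity (N : ℕ) (hN : 3 ≤ N) (g : ℕ)
    (μ : Fin (2 * g) → ℂ)
    (hint : ∀ i, IsIntegral ℤ (μ i))
    (hcong : ∀ i, IsIntegral ℤ ((μ i - 1) / (N : ℂ))) :
    ∀ z : ℂ, (∃ n : Fin (2 * g) → ℤ, z = ∏ i, μ i ^ n i) →
      ∀ k : ℕ, 0 < k → z ^ k = 1 → z = 1 := by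
  rintro z ⟨n, hz⟩ k hk hzk
  have hN0 : (N:ℂ) ≠ 0 := by simp only [ne_eq, Nat.cast_eq_zero]; omega
  have hz0 : z ≠ 0 := by
    intro h; rw [h, zero_pow hk.ne'] at hzk; exact zero_ne_one hzk
  -- each factor is nonzero
  have hfac : ∀ i, μ i ≠ 0 ∨ n i = 0 := by
    intro i
    by_contra h
    push_neg at h
    obtain ⟨h1, h2⟩ := h
    have : μ i ^ n i = 0 := by rw [h1]; exact zero_zpow _ h2
    apply hz0
    rw [hz]
    exact Finset.prod_eq_zero (Finset.mem_univ i) this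
  set a : Fin (2*g) → ℕ := fun i => (n i).toNat with ha
  set b : Fin (2*g) → ℕ := fun i => (-(n i)).toNat with hb
  have hAB : z * ∏ i, μ i ^ b i = ∏ i, μ i ^ a i := by
    rw [hz, ← Finset.prod_mul_distrib]
    apply Finset.prod_congr rfl
    intro i _
    rcases hfac i with h | h
    · rw [← zpow_natCast (μ i) (b i), ← zpow_natCast (μ i) (a i), ← zpow_add₀ h]
      congr 1
      simp only [ha, hb]
      omega
    · simp [h, ha, hb]
  have hzint : IsIntegral ℤ z := by
    refine ⟨X ^ k - 1, ?_, ?_⟩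
    · exact monic_X_pow_sub_C 1 hk.ne'
    · simp [eval₂_sub, eval₂_pow, hzk]
  obtain ⟨hAint, hAcong⟩ := cong_prod hN0 Finset.univ (fun i => μ i ^ a i)
    (fun i _ => (hint i).pow _) (fun i _ => cong_pow hN0 (hint i) (hcong i) _)
  obtain ⟨hBint, hBcong⟩ := cong_prod hN0 Finset.univ (fun i => μ i ^ b i)
    (fun i _ => (hint i).pow _) (fun i _ => cong_pow hN0 (hint i) (hcong i) _)
  have hzcong : IsIntegral ℤ ((z - 1) / N) := by
    have h : (z - 1) / N = ((∏ i, μ i ^ a i) - 1) / N - z * (((∏ i, μ i ^ b i) - 1) / N) := by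
      rw [← hAB]
      field_simp
      ring
    rw [h]
    exact hAcong.sub (hzint.mul hBcong)
  exact root_of_unity_cong_one hN hk hzk hzcong
end
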